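/- arXiv:1812.08074 — 11 statements merged into one kernel-verified Lean document; each statement's English description precedes it below -/
import Mathlib

section
/- Let X ∈ m_i and Y ∈ m_j with i ≠ j be Q-orthonormal vectors. Then K(X,Y) = Σ_{k=1}^{ℓ} [(λ_i² + λ_j² − 3λ_k² − 2λ_iλ_j + 2λ_iλ_k + 2λ_jλ_k)/(4 λ_i λ_j λ_k)] · |⁅X,Y⁆_{m_k}|²_Q. -/
open scoped RealInnerProductSpace

variable {𝔤 : Type*} [NormedAddCommGroup 𝔤] [InnerProductSpace ℝ 𝔤] [FiniteDimensional ℝ 𝔤]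

/-- The invariant metric `g` on `m = 𝔥ᗮ` determined by the orthogonal decomposition
`m = m_1 ⊕ ⋯ ⊕ m_ℓ` and the positive coefficients `λ_i`:  `g(X,Y) = λ_i Q(X,Y)` for
`X, Y ∈ m_i` and `g(m_i, m_j) = 0` for `i ≠ j`. -/
noncomputable def gmet {ℓ : ℕ} (m : Fin ℓ → Submodule ℝ 𝔤) (lam : Fin ℓ → ℝ) (x y : 𝔤) : ℝ :=
  ∑ i, lam i * ⟪(Submodule.orthogonalProjectionOnto (m i) x : 𝔤), (Submodule.orthogonalProjectionOnto (m i) y : 𝔤)⟫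

/-- The sectional curvature expression `K(X,Y)` for `X ∈ m_i`, `Y ∈ m_j`:
with `X̃ = X/√λ_i`, `Ỹ = Y/√λ_j`,
`K(X,Y) = −(3/4)|⁅X̃,Ỹ⁆_m|²_g − (1/2) g(⁅X̃,⁅X̃,Ỹ⁆⁆_m, Ỹ) − (1/2) g(⁅Ỹ,⁅Ỹ,X̃⁆⁆_m, X̃)
  + |U(X̃,Ỹ)|²_g − g(U(X̃,X̃), U(Ỹ,Ỹ))`. -/
noncomputable def Kcurv {ℓ : ℕ} (𝔥 : Submodule ℝ 𝔤) (m : Fin ℓ → Submodule ℝ 𝔤)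
    (lam : Fin ℓ → ℝ) (L : 𝔤 →ₗ[ℝ] 𝔤 →ₗ[ℝ] 𝔤) (U : 𝔤 → 𝔤 → 𝔤) (i j : Fin ℓ) (X Y : 𝔤) : ℝ :=
  let Xt := (Real.sqrt (lam i))⁻¹ • X;
  let Yt := (Real.sqrt (lam j))⁻¹ • Y;
  let Pm : 𝔤 → 𝔤 := (fun z => (Submodule.orthogonalProjectionOnto 𝔥ᗮ z : 𝔤));
  -(3/4) * gmet m lam (Pm (L Xt Yt)) (Pm (L Xt Yt))
    - (1/2) * gmet m lam (Pm (L Xt (L Xt Yt))) Yt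
    - (1/2) * gmet m lam (Pm (L Yt (L Yt Xt))) Xt
    + gmet m lam (U Xt Yt) (U Xt Yt)
    - gmet m lam (U Xt Xt) (U Yt Yt)

theorem orthogonalProjection_eq_self_iff {K : Submodule ℝ 𝔤} [K.HasOrthogonalProjection]
    {v : 𝔤} : (K.orthogonalProjectionOnto v : 𝔤) = v ↔ v ∈ K :=
  Submodule.starProjection_eq_self_iff

theorem inner_orthogonalProjection_left_eq_right {K : Submodule ℝ 𝔤} [K.HasOrthogonalProjection]
    (u v : 𝔤) : ⟪(K.orthogonalProjectionOnto u : 𝔤), v⟫ = ⟪u, (K.orthogonalProjectionOnto v : 𝔤)⟫ :=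
  Submodule.inner_starProjection_left_eq_right K u v

set_option maxHeartbeats 1600000 in
/-- For `Q`-orthonormal vectors `X ∈ m_i`, `Y ∈ m_j` with `i ≠ j`,
`K(X,Y) = Σ_k (λ_i² + λ_j² − 3λ_k² − 2λ_iλ_j + 2λ_iλ_k + 2λ_jλ_k)/(4λ_iλ_jλ_k) · |⁅X,Y⁆_{m_k}|²_Q`. -/
theorem sec_curvature_formula_offdiag {ℓ : ℕ}
    -- 𝔤 is a real Lie algebra with bracket L …
    (L : 𝔤 →ₗ[ℝ] 𝔤 →ₗ[ℝ] 𝔤)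
    (halt : ∀ x : 𝔤, L x x = 0)
    (hjac : ∀ x y z : 𝔤, L x (L y z) + L y (L z x) + L z (L x y) = 0)
    -- … whose inner product Q is ad-invariant
    (had : ∀ x y z : 𝔤, ⟪L x y, z⟫ + ⟪y, L x z⟫ = 0)
    -- 𝔥 ⊆ 𝔤 is a Lie subalgebra, m := 𝔥ᗮ
    (𝔥 : Submodule ℝ 𝔤) (h𝔥 : ∀ x ∈ 𝔥, ∀ y ∈ 𝔥, L x y ∈ 𝔥)
    -- m = m_1 ⊕ ⋯ ⊕ m_ℓ, pairwise Q-orthogonal, with ⁅𝔥, m_i⁆ ⊆ m_i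
    (m : Fin ℓ → Submodule ℝ 𝔤)
    (hm_le : ∀ i, m i ≤ 𝔥ᗮ)
    (hm_orth : ∀ i j, i ≠ j → ∀ x ∈ m i, ∀ y ∈ m j, ⟪x, y⟫ = 0)
    (hm_span : (⨆ i, m i) = 𝔥ᗮ)
    (hm_inv : ∀ i, ∀ h ∈ 𝔥, ∀ x ∈ m i, L h x ∈ m i)
    -- the positive coefficients λ_i
    (lam : Fin ℓ → ℝ) (hlam : ∀ i, 0 < lam i)
    -- U is the symmetric bilinear map on m determined by
    -- 2 g(U(X,Y), Z) = g(⁅Z,X⁆_m, Y) + g(⁅Z,Y⁆_m, X) for all Z ∈ m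
    (U : 𝔤 → 𝔤 → 𝔤)
    (hUmem : ∀ x y, U x y ∈ 𝔥ᗮ)
    (hUsymm : ∀ x y, U x y = U y x)
    (hU : ∀ x ∈ 𝔥ᗮ, ∀ y ∈ 𝔥ᗮ, ∀ z ∈ 𝔥ᗮ,
      2 * gmet m lam (U x y) z =
        gmet m lam ((Submodule.orthogonalProjectionOnto 𝔥ᗮ (L z x) : 𝔤)) y +
        gmet m lam ((Submodule.orthogonalProjectionOnto 𝔥ᗮ (L z y) : 𝔤)) x)
    -- X ∈ m_i, Y ∈ m_j, i ≠ j, Q-orthonormal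
    (i j : Fin ℓ) (hij : i ≠ j) (X Y : 𝔤) (hX : X ∈ m i) (hY : Y ∈ m j)
    (hXnorm : ‖X‖ = 1) (hYnorm : ‖Y‖ = 1) :
    Kcurv 𝔥 m lam L U i j X Y =
      ∑ k, ((lam i ^ 2 + lam j ^ 2 - 3 * lam k ^ 2 - 2 * lam i * lam j
              + 2 * lam i * lam k + 2 * lam j * lam k) / (4 * lam i * lam j * lam k)) *
        ‖(Submodule.orthogonalProjectionOnto (m k) (L X Y) : 𝔤)‖ ^ 2 := by
  classical
  have hine : lam i ≠ 0 := (hlam i).ne'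
  have hjne : lam j ≠ 0 := (hlam j).ne'
  -- flipped ad-invariance : ⟪L a x, y⟫ = ⟪a, L x y⟫
  have hadd : ∀ a x y : 𝔤, ⟪L a x, y⟫ = ⟪a, L x y⟫ := by
    intro a x y
    have h1 : L a x = -(L x a) := by
      have h : L a x + L x a = 0 := by
        have h := halt (a + x)
        simp only [map_add, LinearMap.add_apply, halt, zero_add, add_zero] at h
        linear_combination (norm := abel) h
      exact eq_neg_of_add_eq_zero_left h
    have h2 := had x a y
    rw [h1, inner_neg_left]
    linarith
  set si : ℝ := (Real.sqrt (lam i))⁻¹ with hsi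
  set sj : ℝ := (Real.sqrt (lam j))⁻¹ with hsj
  have hsi2 : si ^ 2 = (lam i)⁻¹ := by rw [hsi, inv_pow, Real.sq_sqrt (hlam i).le]
  have hsj2 : sj ^ 2 = (lam j)⁻¹ := by rw [hsj, inv_pow, Real.sq_sqrt (hlam j).le]
  have hsisj : (si * sj) ^ 2 = (lam i)⁻¹ * (lam j)⁻¹ := by rw [mul_pow, hsi2, hsj2]
  set B : 𝔤 := L X Y with hBdef
  set Bk : Fin ℓ → 𝔤 := fun k => (Submodule.orthogonalProjectionOnto (m k) B : 𝔤) with hBkdef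
  have hBkmem : ∀ k, Bk k ∈ m k := fun k => SetLike.coe_mem _
  -- B ∈ 𝔥ᗮ
  have hBmem : B ∈ 𝔥ᗮ := by
    rw [Submodule.mem_orthogonal]
    intro h hh
    have h1 : ⟪L h X, Y⟫ = 0 := hm_orth i j hij _ (hm_inv i h hh X hX) Y hY
    rw [hBdef, ← hadd h X Y, h1]
  have hPself : ∀ v : 𝔤, v ∈ 𝔥ᗮ → (Submodule.orthogonalProjectionOnto 𝔥ᗮ v : 𝔤) = v :=
    fun v hv => orthogonalProjection_eq_self_iff.2 hv
  -- gmet with one argument in m k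
  have G1 : ∀ (u y : 𝔤) (k : Fin ℓ), y ∈ m k → gmet m lam u y = lam k * ⟪u, y⟫ := by
    intro u y k hy
    unfold gmet
    rw [Finset.sum_eq_single k]
    · rw [orthogonalProjection_eq_self_iff.2 hy, inner_orthogonalProjection_left_eq_right,
        orthogonalProjection_eq_self_iff.2 hy]
    · intro k' _ hk'
      have hy0 : (Submodule.orthogonalProjectionOnto (m k') y) = 0 :=
        Submodule.orthogonalProjectionOnto_apply_of_mem_orthogonal
          ((Submodule.mem_orthogonal _ _).2 (fun u hu => hm_orth k' k hk' u hu y hy))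
      rw [hy0]
      simp
    · intro hk; simp at hk
  have P1 : ∀ (v y : 𝔤), y ∈ 𝔥ᗮ → ⟪(Submodule.orthogonalProjectionOnto 𝔥ᗮ v : 𝔤), y⟫ = ⟪v, y⟫ := by
    intro v y hy
    rw [inner_orthogonalProjection_left_eq_right, hPself y hy]
  have GP : ∀ (v y : 𝔤) (k : Fin ℓ), y ∈ m k →
      gmet m lam ((Submodule.orthogonalProjectionOnto 𝔥ᗮ v : 𝔤)) y = lam k * ⟪v, y⟫ := by
    intro v y k hy
    rw [G1 _ _ k hy, P1 v y (hm_le k hy)]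
  -- decomposition of B
  have hdecomp : B = ∑ k, Bk k := by
    set w : 𝔤 := B - ∑ k, Bk k with hw
    have hworth : w ∈ 𝔥ᗮ :=
      Submodule.sub_mem _ hBmem
        (Submodule.sum_mem _ fun k _ => hm_le k (hBkmem k))
    have hwperp : ∀ k, w ∈ (m k)ᗮ := by
      intro k
      rw [Submodule.mem_orthogonal]
      intro x hx
      have hxB : ∀ k', k' ≠ k → ⟪x, Bk k'⟫ = 0 := fun k' hk' =>
        real_inner_comm x (Bk k') ▸ hm_orth k' k hk' _ (hBkmem k') x hx
      have hsum : ∑ k', ⟪x, Bk k'⟫ = ⟪x, Bk k⟫ := by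
        rw [Finset.sum_eq_single k]
        · intro k' _ hk'; exact hxB k' hk'
        · intro hk; simp at hk
      have hxk : ⟪x, Bk k⟫ = ⟪x, B⟫ := by
        rw [hBkdef]
        rw [← inner_orthogonalProjection_left_eq_right,
          orthogonalProjection_eq_self_iff.2 hx]
      rw [hw, inner_sub_right, inner_sum, hsum, hxk, sub_self]
    have hwh : w ∈ 𝔥 := by
      have h1 : w ∈ (⨆ k, m k)ᗮ := by
        rw [← Submodule.iInf_orthogonal]
        exact (Submodule.mem_iInf _).2 hwperp
      rw [hm_span, Submodule.orthogonal_orthogonal] at h1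
      exact h1
    have hzero : ⟪w, w⟫ = 0 := (Submodule.mem_orthogonal _ _).1 hworth w hwh
    have : w = 0 := inner_self_eq_zero.1 hzero
    exact sub_eq_zero.1 this
  have hBBk : ∀ k, ⟪B, Bk k⟫ = ‖Bk k‖ ^ 2 := by
    intro k
    have : ⟪Bk k, Bk k⟫ = ⟪B, Bk k⟫ := by
      rw [hBkdef]
      rw [inner_orthogonalProjection_left_eq_right,
        Submodule.orthogonalProjectionOnto_mem_subspace_eq_self]
    rw [← this, real_inner_self_eq_norm_sq]
  have hBB : ⟪B, B⟫ = ∑ k, ‖Bk k‖ ^ 2 := by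
    have h1 : (⟪B, B⟫ : ℝ) = ⟪B, ∑ k, Bk k⟫ := by rw [← hdecomp]
    rw [h1, inner_sum]
    exact Finset.sum_congr rfl fun k _ => hBBk k
  -- bracket of the rescaled vectors
  have hbr : L (si • X) (sj • Y) = (si * sj) • B := by
    rw [LinearMap.map_smul₂, map_smul, smul_smul, hBdef]
  have hbr' : L (sj • Y) (si • X) = -((si * sj) • B) := by
    have hflip : L Y X = -B := by
      have h : L Y X + B = 0 := by
        have h := halt (X + Y)
        simp only [map_add, LinearMap.add_apply, halt, zero_add, add_zero] at h
        rw [hBdef]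
        linear_combination (norm := abel) h
      exact eq_neg_of_add_eq_zero_left h
    rw [LinearMap.map_smul₂, map_smul, smul_smul, hflip, mul_comm sj si, smul_neg]
  -- memberships of the rescaled vectors
  have hXtm : si • X ∈ m i := Submodule.smul_mem _ _ hX
  have hYtm : sj • Y ∈ m j := Submodule.smul_mem _ _ hY
  have hXth : si • X ∈ 𝔥ᗮ := hm_le i hXtm
  have hYth : sj • Y ∈ 𝔥ᗮ := hm_le j hYtm
  -- Term 1
  have hT1 : gmet m lam ((Submodule.orthogonalProjectionOnto 𝔥ᗮ (L (si • X) (sj • Y)) : 𝔤))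
      ((Submodule.orthogonalProjectionOnto 𝔥ᗮ (L (si • X) (sj • Y)) : 𝔤))
      = ((lam i)⁻¹ * (lam j)⁻¹) * ∑ k, lam k * ‖Bk k‖ ^ 2 := by
    rw [hbr, map_smul, Submodule.coe_smul, hPself B hBmem]
    unfold gmet
    rw [Finset.mul_sum]
    refine Finset.sum_congr rfl fun k _ => ?_
    rw [map_smul, Submodule.coe_smul, real_inner_smul_left, real_inner_smul_right,
      real_inner_self_eq_norm_sq]
    have : si * sj * (si * sj * ‖Bk k‖ ^ 2) = (si * sj) ^ 2 * ‖Bk k‖ ^ 2 := by ring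
    rw [this, hsisj]
    ring
  -- Term 2
  have hT2 : gmet m lam
      ((Submodule.orthogonalProjectionOnto 𝔥ᗮ (L (si • X) (L (si • X) (sj • Y))) : 𝔤)) (sj • Y)
      = -((lam i)⁻¹ * ⟪B, B⟫) := by
    rw [GP _ _ j hYtm]
    have h := had (si • X) (L (si • X) (sj • Y)) (sj • Y)
    have h3 : ⟪L (si • X) (sj • Y), L (si • X) (sj • Y)⟫ = (si * sj) ^ 2 * ⟪B, B⟫ := by
      rw [hbr, real_inner_smul_left, real_inner_smul_right]; ring
    rw [h3] at h
    have h4 : ⟪L (si • X) (L (si • X) (sj • Y)), sj • Y⟫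
        = -((si * sj) ^ 2 * ⟪B, B⟫) := by linarith
    rw [h4, hsisj]
    field_simp
  -- Term 3
  have hT3 : gmet m lam
      ((Submodule.orthogonalProjectionOnto 𝔥ᗮ (L (sj • Y) (L (sj • Y) (si • X))) : 𝔤)) (si • X)
      = -((lam j)⁻¹ * ⟪B, B⟫) := by
    rw [GP _ _ i hXtm]
    have h := had (sj • Y) (L (sj • Y) (si • X)) (si • X)
    have h3 : ⟪L (sj • Y) (si • X), L (sj • Y) (si • X)⟫ = (si * sj) ^ 2 * ⟪B, B⟫ := by
      rw [hbr', inner_neg_left, inner_neg_right, real_inner_smul_left,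
        real_inner_smul_right]
      ring
    rw [h3] at h
    have h4 : ⟪L (sj • Y) (L (sj • Y) (si • X)), si • X⟫
        = -((si * sj) ^ 2 * ⟪B, B⟫) := by linarith
    rw [h4, hsisj]
    field_simp
  -- Term 4
  have hUk : ∀ k, ⟪U (si • X) (sj • Y), Bk k⟫
      = (lam j - lam i) * (si * sj) * ‖Bk k‖ ^ 2 / (2 * lam k) := by
    intro k
    have hkne : lam k ≠ 0 := (hlam k).ne'
    have h := hU (si • X) hXth (sj • Y) hYth (Bk k) (hm_le k (hBkmem k))
    rw [GP _ _ j hYtm, GP _ _ i hXtm, G1 _ _ k (hBkmem k)] at h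
    rw [hadd, hadd, hbr, hbr'] at h
    rw [inner_neg_right, real_inner_smul_right] at h
    have hBkB : ⟪Bk k, B⟫ = ‖Bk k‖ ^ 2 := by rw [real_inner_comm]; exact hBBk k
    rw [hBkB] at h
    field_simp
    linarith
  have hUB : ⟪U (si • X) (sj • Y), B⟫ = ∑ k, ⟪U (si • X) (sj • Y), Bk k⟫ := by
    have h1 : (⟪U (si • X) (sj • Y), B⟫ : ℝ) = ⟪U (si • X) (sj • Y), ∑ k, Bk k⟫ := by
      rw [← hdecomp]
    rw [h1, inner_sum]
  have hT4 : gmet m lam (U (si • X) (sj • Y)) (U (si • X) (sj • Y))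
      = ∑ k, ((lam j - lam i) ^ 2 * ((lam i)⁻¹ * (lam j)⁻¹) / (4 * lam k)) * ‖Bk k‖ ^ 2 := by
    have h := hU (si • X) hXth (sj • Y) hYth (U (si • X) (sj • Y)) (hUmem _ _)
    rw [GP _ _ j hYtm, GP _ _ i hXtm] at h
    rw [hadd, hadd, hbr, hbr'] at h
    rw [inner_neg_right, real_inner_smul_right] at h
    have hg : gmet m lam (U (si • X) (sj • Y)) (U (si • X) (sj • Y))
        = (lam j - lam i) * (si * sj) / 2 * ∑ k, ⟪U (si • X) (sj • Y), Bk k⟫ := by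
      rw [← hUB]; linear_combination h / 2
    rw [hg, Finset.mul_sum]
    refine Finset.sum_congr rfl fun k _ => ?_
    rw [hUk k]
    linear_combination ((lam j - lam i) ^ 2 * ‖Bk k‖ ^ 2 / (4 * lam k)) * hsisj
  -- Term 5
  have hT5 : gmet m lam (U (si • X) (si • X)) (U (sj • Y) (sj • Y)) = 0 := by
    have h := hU (si • X) hXth (si • X) hXth (U (sj • Y) (sj • Y)) (hUmem _ _)
    rw [GP _ _ i hXtm] at h
    rw [hadd] at h
    have hz : L (si • X) (si • X) = 0 := halt _
    rw [hz, inner_zero_right] at h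
    linarith
  -- assemble
  simp only [Kcurv]
  rw [hT1, hT2, hT3, hT4, hT5, hBB]
  simp only [mul_neg, neg_mul, neg_neg, Finset.mul_sum, ← Finset.sum_neg_distrib,
    ← Finset.sum_sub_distrib, ← Finset.sum_add_distrib, sub_zero]
  refine Finset.sum_congr rfl fun k _ => ?_
  have hkne : lam k ≠ 0 := (hlam k).ne'
  field_simp
  ring
end

section
/- Let 𝔥 ⊆ 𝔤 be a Lie subalgebra, and let m_i and m_j be Q-orthogonal subspaces of 𝔥^⊥ with ⁅𝔥, m_i⁆ ⊆ m_i and ⁅𝔥, m_j⁆ ⊆ m_j. Let (z_γ) be a Q-orthonormal basis of 𝔥 and suppose the Casimir operator C := −Σ_γ ad(z_γ) ∘ ad(z_γ) acts on m_i as the scalar c_i, i.e. C(X) = c_i X for all X ∈ m_i. Then for any Q-orthonormal bases (e_α) of m_i and (f_β) of m_j: Σ_{α,α'} |⁅e_α, e_{α'}⁆_𝔥|²_Q = (dim m_i)·c_i, and Σ_{α,β} |⁅e_α, f_β⁆_𝔥|²_Q = 0. -/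
open scoped RealInnerProductSpace

variable {𝔤 : Type*} [NormedAddCommGroup 𝔤] [InnerProductSpace ℝ 𝔤] [FiniteDimensional ℝ 𝔤]

lemma onb_repr {V : Submodule ℝ 𝔤} {n : ℕ} {b : Fin n → 𝔤}
    (hb : ∀ i, b i ∈ V) (hs : Submodule.span ℝ (Set.range b) = V)
    (hon : ∀ i j, ⟪b i, b j⟫ = if i = j then 1 else 0)
    {v : 𝔤} (hv : v ∈ V) : v = ∑ i, ⟪b i, v⟫ • b i := by
  set w := v - ∑ i, ⟪b i, v⟫ • b i with hw
  have hwV : w ∈ V :=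
    Submodule.sub_mem V hv (Submodule.sum_mem V fun i _ => Submodule.smul_mem V _ (hb i))
  have hperp : ∀ j, ⟪b j, w⟫ = 0 := by
    intro j
    rw [hw, inner_sub_right, inner_sum]
    simp only [real_inner_smul_right, hon]
    rw [Finset.sum_eq_single j]
    · simp
    · intro i _ hij; simp [hij.symm]
    · simp
  have hall : ∀ x ∈ V, ⟪x, w⟫ = 0 := by
    rw [← hs]
    intro x hx
    induction hx using Submodule.span_induction with
    | mem x hx => obtain ⟨j, rfl⟩ := hx; exact hperp j
    | zero => simp
    | add x y _ _ hx hy => rw [inner_add_left, hx, hy]; ring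
    | smul c x _ hx => rw [real_inner_smul_left, hx]; ring
  have hw0 : w = 0 := by
    have := hall w hwV
    rwa [real_inner_self_eq_norm_sq, pow_eq_zero_iff (by norm_num), norm_eq_zero] at this
  exact sub_eq_zero.mp hw0

lemma onb_norm_sq {V : Submodule ℝ 𝔤} {n : ℕ} {b : Fin n → 𝔤}
    (hb : ∀ i, b i ∈ V) (hs : Submodule.span ℝ (Set.range b) = V)
    (hon : ∀ i j, ⟪b i, b j⟫ = if i = j then 1 else 0)
    {v : 𝔤} (hv : v ∈ V) : ‖v‖ ^ 2 = ∑ i, ⟪b i, v⟫ ^ 2 := by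
  rw [← real_inner_self_eq_norm_sq]
  nth_rewrite 1 [onb_repr hb hs hon hv]
  rw [sum_inner]
  refine Finset.sum_congr rfl fun i _ => ?_
  rw [real_inner_smul_left, sq]

lemma proj_norm_sq {V : Submodule ℝ 𝔤} {n : ℕ} {b : Fin n → 𝔤}
    (hb : ∀ i, b i ∈ V) (hs : Submodule.span ℝ (Set.range b) = V)
    (hon : ∀ i j, ⟪b i, b j⟫ = if i = j then 1 else 0)
    (w : 𝔤) : ‖(Submodule.orthogonalProjection V w : 𝔤)‖ ^ 2 = ∑ i, ⟪b i, w⟫ ^ 2 := by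
  set u : 𝔤 := ∑ i, ⟪b i, w⟫ • b i with hu
  have huV : u ∈ V := Submodule.sum_mem V fun i _ => Submodule.smul_mem V _ (hb i)
  have hinner : ∀ j, ⟪b j, u⟫ = ⟪b j, w⟫ := by
    intro j
    rw [hu, inner_sum]
    simp only [real_inner_smul_right, hon]
    rw [Finset.sum_eq_single j]
    · simp
    · intro i _ hij; simp [hij.symm]
    · simp
  have hperp : w - u ∈ Vᗮ := by
    rw [← hs]
    intro x hx
    induction hx using Submodule.span_induction with
    | mem x hx =>
        obtain ⟨j, rfl⟩ := hx
        rw [inner_sub_right, hinner j]; ring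
    | zero => simp
    | add x y _ _ hx hy => rw [inner_add_left, hx, hy]; ring
    | smul c x _ hx => rw [real_inner_smul_left, hx]; ring
  have hproj : (Submodule.orthogonalProjection V w : 𝔤) = u :=
    Submodule.eq_starProjection_of_mem_of_inner_eq_zero huV
      (fun x hx => by
        have := hperp x hx
        rwa [real_inner_comm] at this)
  rw [hproj, onb_norm_sq hb hs hon huV]
  exact Finset.sum_congr rfl fun i _ => by rw [hinner i]

/-- If the Casimir operator `C = −Σ_γ ad(z_γ) ∘ ad(z_γ)` of the
subalgebra `𝔥` acts on `m_i` as the scalar `c_i`, then for any `Q`-orthonormal bases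
`(e_α)` of `m_i` and `(f_β)` of `m_j`:
`Σ_{α,α'} |⁅e_α, e_{α'}⁆_𝔥|²_Q = dim(m_i)·c_i` and `Σ_{α,β} |⁅e_α, f_β⁆_𝔥|²_Q = 0`. -/
theorem casimir_bracket_sums
    -- 𝔤 is a real Lie algebra with bracket L …
    (L : 𝔤 →ₗ[ℝ] 𝔤 →ₗ[ℝ] 𝔤)
    (halt : ∀ x : 𝔤, L x x = 0)
    (hjac : ∀ x y z : 𝔤, L x (L y z) + L y (L z x) + L z (L x y) = 0)
    -- … whose inner product Q is ad-invariant
    (had : ∀ x y z : 𝔤, ⟪L x y, z⟫ + ⟪y, L x z⟫ = 0)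
    -- 𝔥 ⊆ 𝔤 is a Lie subalgebra
    (𝔥 : Submodule ℝ 𝔤) (h𝔥 : ∀ x ∈ 𝔥, ∀ y ∈ 𝔥, L x y ∈ 𝔥)
    -- m_i and m_j are Q-orthogonal subspaces of 𝔥ᗮ, invariant under ⁅𝔥, ·⁆
    (mi mj : Submodule ℝ 𝔤) (hmi : mi ≤ 𝔥ᗮ) (hmj : mj ≤ 𝔥ᗮ)
    (horth : ∀ x ∈ mi, ∀ y ∈ mj, ⟪x, y⟫ = 0)
    (hmi_inv : ∀ h ∈ 𝔥, ∀ x ∈ mi, L h x ∈ mi)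
    (hmj_inv : ∀ h ∈ 𝔥, ∀ x ∈ mj, L h x ∈ mj)
    -- (z_γ) is a Q-orthonormal basis of 𝔥
    (p : ℕ) (z : Fin p → 𝔤) (hz_mem : ∀ γ, z γ ∈ 𝔥)
    (hz_span : Submodule.span ℝ (Set.range z) = 𝔥)
    (hz_on : ∀ γ δ, ⟪z γ, z δ⟫ = if γ = δ then 1 else 0)
    -- the Casimir operator C = −Σ_γ ad(z_γ)∘ad(z_γ) acts on m_i as the scalar c_i
    (ci : ℝ) (hcas : ∀ X ∈ mi, (-∑ γ, L (z γ) (L (z γ) X)) = ci • X)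
    -- (e_α) and (f_β) are Q-orthonormal bases of m_i and m_j
    (di dj : ℕ) (e : Fin di → 𝔤) (f : Fin dj → 𝔤)
    (he_mem : ∀ α, e α ∈ mi) (he_span : Submodule.span ℝ (Set.range e) = mi)
    (he_on : ∀ α β, ⟪e α, e β⟫ = if α = β then 1 else 0)
    (hf_mem : ∀ β, f β ∈ mj) (hf_span : Submodule.span ℝ (Set.range f) = mj)
    (hf_on : ∀ α β, ⟪f α, f β⟫ = if α = β then 1 else 0) :
    (∑ α, ∑ α', ‖(Submodule.orthogonalProjection 𝔥 (L (e α) (e α')) : 𝔤)‖ ^ 2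
        = (Module.finrank ℝ mi : ℝ) * ci) ∧
    (∑ α, ∑ β, ‖(Submodule.orthogonalProjection 𝔥 (L (e α) (f β)) : 𝔤)‖ ^ 2 = 0) := by
  have hsk : ∀ x y : 𝔤, L x y = - L y x := by
    intro x y
    have h := halt (x + y)
    simp only [map_add, LinearMap.add_apply, halt, add_zero, zero_add] at h
    exact eq_neg_of_add_eq_zero_right h
  have key : ∀ (x y : 𝔤) (γ : Fin p), ⟪z γ, L x y⟫ = ⟪L (z γ) x, y⟫ := by
    intro x y γ
    have h1 := had x y (z γ)
    rw [hsk x (z γ), inner_neg_right] at h1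
    have c1 : ⟪z γ, L x y⟫ = ⟪L x y, z γ⟫ := real_inner_comm _ _
    have c2 : ⟪L (z γ) x, y⟫ = ⟪y, L (z γ) x⟫ := real_inner_comm _ _
    linarith
  have proj_sq : ∀ w : 𝔤, ‖(Submodule.orthogonalProjection 𝔥 w : 𝔤)‖ ^ 2 = ∑ γ, ⟪z γ, w⟫ ^ 2 :=
    proj_norm_sq hz_mem hz_span hz_on
  constructor
  · -- first sum
    have hcol : ∀ α : Fin di, ∑ α', ‖(Submodule.orthogonalProjection 𝔥 (L (e α) (e α')) : 𝔤)‖ ^ 2 = ci := by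
      intro α
      have step1 : ∀ α', ‖(Submodule.orthogonalProjection 𝔥 (L (e α) (e α')) : 𝔤)‖ ^ 2
          = ∑ γ, ⟪e α', L (z γ) (e α)⟫ ^ 2 := by
        intro α'
        rw [proj_sq]
        refine Finset.sum_congr rfl fun γ _ => ?_
        rw [key, real_inner_comm]
      calc ∑ α', ‖(Submodule.orthogonalProjection 𝔥 (L (e α) (e α')) : 𝔤)‖ ^ 2
          = ∑ α', ∑ γ, ⟪e α', L (z γ) (e α)⟫ ^ 2 := Finset.sum_congr rfl fun α' _ => step1 α'
        _ = ∑ γ, ∑ α', ⟪e α', L (z γ) (e α)⟫ ^ 2 := Finset.sum_comm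
        _ = ∑ γ, ‖L (z γ) (e α)‖ ^ 2 := by
            refine Finset.sum_congr rfl fun γ _ => ?_
            exact (onb_norm_sq he_mem he_span he_on
              (hmi_inv (z γ) (hz_mem γ) (e α) (he_mem α))).symm
        _ = ci := by
            have hc := hcas (e α) (he_mem α)
            have h2 : ∀ γ : Fin p, ‖L (z γ) (e α)‖ ^ 2
                = -⟪e α, L (z γ) (L (z γ) (e α))⟫ := by
              intro γ
              have h3 := had (z γ) (L (z γ) (e α)) (e α)
              rw [← real_inner_self_eq_norm_sq]
              have c1 : ⟪e α, L (z γ) (L (z γ) (e α))⟫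
                  = ⟪L (z γ) (L (z γ) (e α)), e α⟫ := real_inner_comm _ _
              linarith
            calc ∑ γ, ‖L (z γ) (e α)‖ ^ 2
                = ∑ γ, -⟪e α, L (z γ) (L (z γ) (e α))⟫ :=
                  Finset.sum_congr rfl fun γ _ => h2 γ
              _ = ⟪e α, -∑ γ, L (z γ) (L (z γ) (e α))⟫ := by
                  rw [inner_neg_right, inner_sum, Finset.sum_neg_distrib]
              _ = ⟪e α, ci • e α⟫ := by rw [hc]
              _ = ci := by
                  rw [real_inner_smul_right, he_on]
                  simp
    rw [Finset.sum_congr rfl fun α _ => hcol α, Finset.sum_const, Finset.card_univ,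
      Fintype.card_fin, nsmul_eq_mul]
    congr 1
    have hon : Orthonormal ℝ e := orthonormal_iff_ite.mpr (by
      intro i j
      have := he_on i j
      simpa using this)
    rw [← he_span, finrank_span_eq_card hon.linearIndependent, Fintype.card_fin]
  · -- second sum
    refine Finset.sum_eq_zero fun α _ => Finset.sum_eq_zero fun β _ => ?_
    rw [proj_sq]
    refine Finset.sum_eq_zero fun γ _ => ?_
    rw [key]
    rw [horth _ (hmi_inv (z γ) (hz_mem γ) (e α) (he_mem α)) _ (hf_mem β)]
    ring
end

section
/- Let 𝔨 ⊆ 𝔤 be a Lie subalgebra. Then the set n := { X ∈ 𝔨 : ⁅X, p⁆ = 0 for all p ∈ 𝔨^⊥ } is an ideal of 𝔤 contained in 𝔨. (This is the kernel of the isotropy representation of the reductive pair (𝔤, 𝔨).) -/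
open scoped RealInnerProductSpace

variable {𝔤 : Type*} [NormedAddCommGroup 𝔤] [InnerProductSpace ℝ 𝔤] [FiniteDimensional ℝ 𝔤]

/-- For a Lie subalgebra `𝔨 ⊆ 𝔤`, the set
`n = { X ∈ 𝔨 : ⁅X, p⁆ = 0 for all p ∈ 𝔨ᗮ }` (the kernel of the isotropy representation
of the reductive pair `(𝔤, 𝔨)`) is an ideal of `𝔤` contained in `𝔨`. -/
theorem isotropy_kernel_is_ideal
    -- 𝔤 is a real Lie algebra with bracket L …
    (L : 𝔤 →ₗ[ℝ] 𝔤 →ₗ[ℝ] 𝔤)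
    (halt : ∀ x : 𝔤, L x x = 0)
    (hjac : ∀ x y z : 𝔤, L x (L y z) + L y (L z x) + L z (L x y) = 0)
    -- … whose inner product Q is ad-invariant
    (had : ∀ x y z : 𝔤, ⟪L x y, z⟫ + ⟪y, L x z⟫ = 0)
    -- 𝔨 ⊆ 𝔤 is a Lie subalgebra
    (𝔨 : Submodule ℝ 𝔤) (h𝔨 : ∀ x ∈ 𝔨, ∀ y ∈ 𝔨, L x y ∈ 𝔨) :
    -- n is a submodule of 𝔤 contained in 𝔨 which is an ideal: ⁅𝔤, n⁆ ⊆ n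
    ∃ n : Submodule ℝ 𝔤,
      (∀ x : 𝔤, x ∈ n ↔ (x ∈ 𝔨 ∧ ∀ p ∈ 𝔨ᗮ, L x p = 0)) ∧
      n ≤ 𝔨 ∧
      (∀ y : 𝔤, ∀ x ∈ n, L y x ∈ n) := by
  -- antisymmetry
  have hanti : ∀ x y : 𝔤, L x y = - L y x := by
    intro x y
    have h := halt (x + y)
    simp only [map_add, LinearMap.add_apply, halt] at h
    have h' : L y x + L x y = 0 := by simpa using h
    exact eq_neg_of_add_eq_zero_right h'
  -- 𝔨ᗮ is invariant under ad(𝔨)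
  have hinv : ∀ k ∈ 𝔨, ∀ p ∈ 𝔨ᗮ, L k p ∈ 𝔨ᗮ := by
    intro k hk p hp
    intro q hq
    have h1 := had k q p
    have h2 : ⟪L k q, p⟫ = 0 := hp _ (h𝔨 k hk q hq)
    linarith
  refine ⟨{ carrier := {x | x ∈ 𝔨 ∧ ∀ p ∈ 𝔨ᗮ, L x p = 0}
            add_mem' := ?_
            zero_mem' := ?_
            smul_mem' := ?_ }, ?_, ?_, ?_⟩
  · rintro a b ⟨ha, ha'⟩ ⟨hb, hb'⟩
    exact ⟨𝔨.add_mem ha hb, fun p hp => by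
      simp [map_add, ha' p hp, hb' p hp]⟩
  · exact ⟨𝔨.zero_mem, fun p hp => by simp⟩
  · rintro c a ⟨ha, ha'⟩
    exact ⟨𝔨.smul_mem c ha, fun p hp => by simp [ha' p hp]⟩
  · intro x; exact Iff.rfl
  · intro x hx; exact hx.1
  · rintro y x ⟨hx, hx'⟩
    -- decompose y = k + p₀
    obtain ⟨k, hk, p₀, hp₀, rfl⟩ := Submodule.exists_add_mem_mem_orthogonal (K := 𝔨) y
    have hLp₀x : L p₀ x = 0 := by
      rw [hanti]; rw [hx' p₀ hp₀]; simp
    have hLyx : L (k + p₀) x = L k x := by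
      simp [map_add, hLp₀x]
    rw [hLyx]
    refine ⟨h𝔨 k hk x hx, ?_⟩
    intro p hp
    have hj := hjac k x p
    have h1 : L x p = 0 := hx' p hp
    have h2 : L x (L p k) = 0 := by
      rw [hanti p k]
      rw [map_neg, hx' (L k p) (hinv k hk p hp)]
      simp
    rw [h1, h2] at hj
    simp only [map_zero, zero_add] at hj
    rw [hanti, hj]; simp
end

section
/- Assume Z(𝔤) = 0. Let 𝔥 ⊆ 𝔨 ⊆ 𝔤 be Lie subalgebras with ⁅𝔨,𝔨⁆ ⊆ 𝔥 (𝔨 is toral over 𝔥), and suppose the only ideal of 𝔤 contained in 𝔥 is {0} (almost-effectivity). Then 𝔨 is faithfully represented by its adjoint action on 𝔨^⊥: if X ∈ 𝔨 satisfies ⁅X, p⁆ = 0 for all p ∈ 𝔨^⊥, then X = 0. -/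
open scoped RealInnerProductSpace

variable {𝔤 : Type*} [NormedAddCommGroup 𝔤] [InnerProductSpace ℝ 𝔤] [FiniteDimensional ℝ 𝔤]

/-- Assume `Z(𝔤) = 0`. If `𝔥 ⊆ 𝔨 ⊆ 𝔤` are Lie subalgebras with
`⁅𝔨,𝔨⁆ ⊆ 𝔥` (`𝔨` toral over `𝔥`) and the only ideal of `𝔤` contained in `𝔥` is `{0}`
(almost-effectivity), then `𝔨` acts faithfully on `𝔨ᗮ` by the adjoint action:
`⁅X, p⁆ = 0` for all `p ∈ 𝔨ᗮ` forces `X = 0` for `X ∈ 𝔨`. -/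
theorem toral_faithful_isotropy
    -- 𝔤 is a real Lie algebra with bracket L …
    (L : 𝔤 →ₗ[ℝ] 𝔤 →ₗ[ℝ] 𝔤)
    (halt : ∀ x : 𝔤, L x x = 0)
    (hjac : ∀ x y z : 𝔤, L x (L y z) + L y (L z x) + L z (L x y) = 0)
    -- … whose inner product Q is ad-invariant
    (had : ∀ x y z : 𝔤, ⟪L x y, z⟫ + ⟪y, L x z⟫ = 0)
    -- the center of 𝔤 is trivial
    (hcenter : ∀ x : 𝔤, (∀ y : 𝔤, L x y = 0) → x = 0)
    -- 𝔥 ⊆ 𝔨 ⊆ 𝔤 are Lie subalgebras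
    (𝔥 𝔨 : Submodule ℝ 𝔤)
    (h𝔥 : ∀ x ∈ 𝔥, ∀ y ∈ 𝔥, L x y ∈ 𝔥)
    (h𝔨 : ∀ x ∈ 𝔨, ∀ y ∈ 𝔨, L x y ∈ 𝔨)
    (h𝔥𝔨 : 𝔥 ≤ 𝔨)
    -- 𝔨 is toral over 𝔥: ⁅𝔨,𝔨⁆ ⊆ 𝔥
    (htoral : ∀ x ∈ 𝔨, ∀ y ∈ 𝔨, L x y ∈ 𝔥)
    -- almost-effectivity: the only ideal of 𝔤 contained in 𝔥 is {0}
    (heff : ∀ n : Submodule ℝ 𝔤, (∀ y : 𝔤, ∀ x ∈ n, L y x ∈ n) → n ≤ 𝔥 → n = ⊥) :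
    ∀ X ∈ 𝔨, (∀ p ∈ 𝔨ᗮ, L X p = 0) → X = 0 := by
  intro X hX hXp
  -- antisymmetry
  have hanti : ∀ x y : 𝔤, L x y = -L y x := by
    intro x y
    have h := halt (x + y)
    simp only [map_add, LinearMap.add_apply, halt] at h
    rw [zero_add, add_zero, add_comm] at h
    exact eq_neg_of_add_eq_zero_left h
  -- 𝔨ᗮ is stable under L k for k ∈ 𝔨
  have hKperp : ∀ k ∈ 𝔨, ∀ p ∈ 𝔨ᗮ, L k p ∈ 𝔨ᗮ := by
    intro k hk p hp
    intro u hu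
    have h := had k p u
    have hpu : ⟪p, L k u⟫ = 0 := by
      rw [real_inner_comm]; exact hp _ (h𝔨 k hk u hu)
    have : ⟪L k p, u⟫ = 0 := by linarith
    rw [real_inner_comm]; linarith [this]
  -- "n" property is preserved by brackets with arbitrary elements
  have hstep : ∀ x, x ∈ 𝔨 → (∀ p ∈ 𝔨ᗮ, L x p = 0) → ∀ w : 𝔤,
      (L w x ∈ 𝔨 ∧ ∀ p ∈ 𝔨ᗮ, L (L w x) p = 0) := by
    intro x hx hxp w
    obtain ⟨k, hk, p0, hp0, hw⟩ := 𝔨.exists_add_mem_mem_orthogonal w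
    have hwx : L w x = L k x := by
      rw [hw, map_add, LinearMap.add_apply]
      have : L p0 x = 0 := by rw [hanti, hxp p0 hp0, neg_zero]
      rw [this, add_zero]
    constructor
    · rw [hwx]; exact h𝔨 k hk x hx
    · intro q hq
      rw [hwx]
      have hj := hjac k x q
      have h1 : L x q = 0 := hxp q hq
      have h2 : L x (L k q) = 0 := hxp _ (hKperp k hk q hq)
      have a : L x (L q k) = 0 := by rw [hanti q k, map_neg, h2, neg_zero]
      rw [h1, map_zero, zero_add, a, zero_add] at hj
      rw [hanti, hj, neg_zero]
  -- the ideal generated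
  set m : Submodule ℝ 𝔤 := Submodule.span ℝ
    {z | ∃ y x, x ∈ 𝔨 ∧ (∀ p ∈ 𝔨ᗮ, L x p = 0) ∧ z = L y x} with hm
  have hm_ideal : ∀ y : 𝔤, ∀ x ∈ m, L y x ∈ m := by
    intro w z hz
    induction hz using Submodule.span_induction with
    | mem z hz =>
      obtain ⟨y, x, hx, hxp, rfl⟩ := hz
      -- L w (L y x) = L (L w y) x + L y (L w x)
      have e1 : L w (L y x) = L (L w y) x + L y (L w x) := by
        have hj := hjac w y x
        rw [hanti x w, map_neg, hanti x (L w y), add_assoc] at hj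
        rw [eq_neg_of_add_eq_zero_left hj]; abel
      rw [e1]
      apply Submodule.add_mem
      · exact Submodule.subset_span ⟨L w y, x, hx, hxp, rfl⟩
      · obtain ⟨hx', hxp'⟩ := hstep x hx hxp w
        exact Submodule.subset_span ⟨y, L w x, hx', hxp', rfl⟩
    | zero => simp
    | add a b _ _ ha hb => rw [map_add]; exact Submodule.add_mem m ha hb
    | smul c a _ ha => rw [map_smul]; exact Submodule.smul_mem m c ha
  have hm_h : m ≤ 𝔥 := by
    rw [hm]
    apply Submodule.span_le.mpr
    rintro z ⟨y, x, hx, hxp, rfl⟩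
    obtain ⟨k, hk, p0, hp0, hy⟩ := 𝔨.exists_add_mem_mem_orthogonal y
    have : L y x = L k x := by
      rw [hy, map_add, LinearMap.add_apply]
      have : L p0 x = 0 := by rw [hanti, hxp p0 hp0, neg_zero]
      rw [this, add_zero]
    rw [this]
    exact htoral k hk x hx
  have hm_bot : m = ⊥ := heff m hm_ideal hm_h
  apply hcenter
  intro y
  have : L y X ∈ m := Submodule.subset_span ⟨y, X, hX, hXp, rfl⟩
  rw [hm_bot, Submodule.mem_bot] at this
  rw [hanti, this, neg_zero]
end

section
/- Let 𝔥 ⊆ 𝔤 be a Lie subalgebra, m := 𝔥^⊥, and let W_1, …, W_s be pairwise Q-orthogonal subspaces with m = W_1 ⊕ ⋯ ⊕ W_s and ⁅𝔥, W_i⁆ ⊆ W_i for every i. Let 1 ≤ q < s, suppose 𝔨 := 𝔥 ⊕ W_1 ⊕ ⋯ ⊕ W_q is a Lie subalgebra of 𝔤, and suppose Q(⁅W_a, W_i⁆, W_j) = 0 whenever a ≤ q < i, j and i ≠ j. Then ⁅𝔨, W_i⁆ ⊆ W_i for every i > q; i.e. each module W_i with i > q is ad(𝔨)-invariant, so every metric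 diagonal with respect to this decomposition and ad(𝔨)-invariant on 𝔨^⊥ is a 𝔨-submersion metric. -/
open scoped RealInnerProductSpace

variable {𝔤 : Type*} [NormedAddCommGroup 𝔤] [InnerProductSpace ℝ 𝔤] [FiniteDimensional ℝ 𝔤]

lemma orthogonal_le_of_sup_top {E : Type*} [NormedAddCommGroup E] [InnerProductSpace ℝ E]
    (M W' : Submodule ℝ E) (hsup : M ⊔ W' = ⊤) (hWM : W' ≤ Mᗮ) : Mᗮ ≤ W' := by
  intro v hv
  have : v ∈ M ⊔ W' := by rw [hsup]; trivial
  obtain ⟨m, hm, w, hw, rfl⟩ := Submodule.mem_sup.1 this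
  have hm0 : m ∈ M ⊓ Mᗮ := ⟨hm, by
    have : m = (m + w) - w := by abel
    rw [this]
    exact Submodule.sub_mem _ hv (hWM hw)⟩
  rw [Submodule.inf_orthogonal_eq_bot, Submodule.mem_bot] at hm0
  rw [hm0, zero_add]
  exact hw

/-- If `𝔨 = 𝔥 ⊕ W_1 ⊕ ⋯ ⊕ W_q` is a Lie subalgebra and
`Q(⁅W_a, W_i⁆, W_j) = 0` whenever `a ≤ q < i, j` with `i ≠ j`, then every module `W_i`
with `i > q` is `ad(𝔨)`-invariant: `⁅𝔨, W_i⁆ ⊆ W_i`.  (Here the modules are indexed by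
`Fin s`, zero-based, so "`a ≤ q`" reads `(a : ℕ) < q` and "`i > q`" reads `q ≤ (i : ℕ)`.) -/
theorem submersion_modules_invariant {s : ℕ}
    -- 𝔤 is a real Lie algebra with bracket L …
    (L : 𝔤 →ₗ[ℝ] 𝔤 →ₗ[ℝ] 𝔤)
    (halt : ∀ x : 𝔤, L x x = 0)
    (hjac : ∀ x y z : 𝔤, L x (L y z) + L y (L z x) + L z (L x y) = 0)
    -- … whose inner product Q is ad-invariant
    (had : ∀ x y z : 𝔤, ⟪L x y, z⟫ + ⟪y, L x z⟫ = 0)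
    -- 𝔥 ⊆ 𝔤 is a Lie subalgebra, m := 𝔥ᗮ
    (𝔥 : Submodule ℝ 𝔤) (h𝔥 : ∀ x ∈ 𝔥, ∀ y ∈ 𝔥, L x y ∈ 𝔥)
    -- m = W_1 ⊕ ⋯ ⊕ W_s, pairwise Q-orthogonal, with ⁅𝔥, W_i⁆ ⊆ W_i
    (W : Fin s → Submodule ℝ 𝔤)
    (hW_le : ∀ i, W i ≤ 𝔥ᗮ)
    (hW_orth : ∀ i j, i ≠ j → ∀ x ∈ W i, ∀ y ∈ W j, ⟪x, y⟫ = 0)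
    (hW_span : (⨆ i, W i) = 𝔥ᗮ)
    (hW_inv : ∀ i, ∀ h ∈ 𝔥, ∀ x ∈ W i, L h x ∈ W i)
    -- 1 ≤ q < s
    (q : ℕ) (hq1 : 1 ≤ q) (hqs : q < s)
    -- 𝔨 := 𝔥 ⊕ W_1 ⊕ ⋯ ⊕ W_q is a Lie subalgebra of 𝔤
    (h𝔨 : ∀ x ∈ 𝔥 ⊔ ⨆ a : {a : Fin s // (a : ℕ) < q}, W a,
          ∀ y ∈ 𝔥 ⊔ ⨆ a : {a : Fin s // (a : ℕ) < q}, W a,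
          L x y ∈ 𝔥 ⊔ ⨆ a : {a : Fin s // (a : ℕ) < q}, W a)
    -- Q(⁅W_a, W_i⁆, W_j) = 0 whenever a ≤ q < i, j and i ≠ j
    (hvanish : ∀ a i j : Fin s, (a : ℕ) < q → q ≤ (i : ℕ) → q ≤ (j : ℕ) → i ≠ j →
      ∀ x ∈ W a, ∀ y ∈ W i, ∀ z ∈ W j, ⟪L x y, z⟫ = 0) :
    -- then ⁅𝔨, W_i⁆ ⊆ W_i for every i > q
    ∀ i : Fin s, q ≤ (i : ℕ) →
      ∀ x ∈ 𝔥 ⊔ ⨆ a : {a : Fin s // (a : ℕ) < q}, W a,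
      ∀ y ∈ W i, L x y ∈ W i := by
  intro i hqi
  -- antisymmetry of the bracket
  have hanti : ∀ x h : 𝔤, L x h = - L h x := by
    intro x h
    have h0 := halt (x + h)
    simp only [map_add, LinearMap.add_apply, halt, zero_add, add_zero] at h0
    exact eq_neg_of_add_eq_zero_right h0
  -- a general orthogonality principle
  have orth_to : ∀ (P : Fin s → Prop) (y : 𝔤), y ∈ 𝔥ᗮ →
      (∀ j, P j → ∀ u ∈ W j, ⟪y, u⟫ = 0) →
      ∀ u ∈ 𝔥 ⊔ ⨆ j : {j : Fin s // P j}, W j, ⟪y, u⟫ = 0 := by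
    intro P y hy𝔥 hyW u hu
    have hle : 𝔥 ⊔ (⨆ j : {j : Fin s // P j}, W j) ≤
        LinearMap.ker (innerSL ℝ y).toLinearMap := by
      apply sup_le
      · intro h hh
        have := (Submodule.mem_orthogonal _ y).1 hy𝔥 h hh
        simp only [LinearMap.mem_ker, ContinuousLinearMap.coe_coe, innerSL_apply_apply]
        rw [real_inner_comm]
        exact this
      · refine iSup_le fun j => fun v hv => ?_
        simp only [LinearMap.mem_ker, ContinuousLinearMap.coe_coe, innerSL_apply_apply]
        exact hyW j j.2 v hv
    have := hle hu
    simpa using this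
  -- everything in W i is orthogonal to 𝔨
  have hyK : ∀ y ∈ W i, ∀ u ∈ 𝔥 ⊔ ⨆ a : {a : Fin s // (a : ℕ) < q}, W a, ⟪y, u⟫ = 0 := by
    intro y hy
    exact orth_to (fun a => (a : ℕ) < q) y (hW_le i hy)
      (fun j hj u hu => hW_orth i j (Fin.ne_of_val_ne (by omega)) y hy u hu)
  -- the complementary module
  set M : Submodule ℝ 𝔤 := 𝔥 ⊔ ⨆ j : {j : Fin s // j ≠ i}, W j with hM
  have hWiM : W i ≤ Mᗮ := by
    intro w hw
    rw [Submodule.mem_orthogonal]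
    intro u hu
    rw [real_inner_comm]
    exact orth_to (fun j => j ≠ i) w (hW_le i hw)
      (fun j hj u hu => hW_orth i j (Ne.symm hj) w hw u hu) u hu
  have htop : M ⊔ W i = ⊤ := by
    rw [eq_top_iff, ← Submodule.sup_orthogonal_of_hasOrthogonalProjection (K := 𝔥)]
    apply sup_le
    · exact le_sup_left.trans le_sup_left
    · rw [← hW_span]
      apply iSup_le
      intro j
      by_cases hj : j = i
      · subst hj; exact le_sup_right
      · exact (le_iSup (fun j' : {j : Fin s // j ≠ i} => W j') ⟨j, hj⟩).trans
          (le_sup_right.trans le_sup_left)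
  -- the key computation: brackets of W a (a < q) with W i stay in W i
  have key : ∀ a : Fin s, (a : ℕ) < q → ∀ x ∈ W a, ∀ y ∈ W i, L x y ∈ W i := by
    intro a ha x hxa y hy
    have hia : i ≠ a := Fin.ne_of_val_ne (by omega)
    have hv𝔥 : ∀ h ∈ 𝔥, ⟪L x y, h⟫ = 0 := by
      intro h hh
      have h1 := had x y h
      have h3 : ⟪y, L x h⟫ = 0 := by
        rw [hanti x h, inner_neg_right,
          hW_orth i a hia y hy (L h x) (hW_inv a h hh x hxa), neg_zero]
      linarith
    have hvW : ∀ j : Fin s, j ≠ i → ∀ z ∈ W j, ⟪L x y, z⟫ = 0 := by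
      intro j hji z hz
      by_cases hjq : q ≤ (j : ℕ)
      · exact hvanish a i j ha hqi hjq (Ne.symm hji) x hxa y hy z hz
      · push_neg at hjq
        have hxK : x ∈ 𝔥 ⊔ ⨆ a : {a : Fin s // (a : ℕ) < q}, W a :=
          Submodule.mem_sup_right
            (le_iSup (fun a' : {a : Fin s // (a : ℕ) < q} => W a') ⟨a, ha⟩ hxa)
        have hzK : z ∈ 𝔥 ⊔ ⨆ a : {a : Fin s // (a : ℕ) < q}, W a :=
          Submodule.mem_sup_right
            (le_iSup (fun a' : {a : Fin s // (a : ℕ) < q} => W a') ⟨j, hjq⟩ hz)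
        have hLK := h𝔨 x hxK z hzK
        have h1 := had x y z
        have h2 := hyK y hy _ hLK
        linarith
    apply orthogonal_le_of_sup_top M (W i) htop hWiM
    rw [Submodule.mem_orthogonal]
    intro u hu
    rw [real_inner_comm]
    refine orth_to (fun j => j ≠ i) (L x y) ?_ (fun j hj z hz => hvW j hj z hz) u hu
    rw [Submodule.mem_orthogonal]
    intro h hh
    rw [real_inner_comm]
    exact hv𝔥 h hh
  -- conclude by linearity in x
  intro x hx y hy
  have hS : 𝔥 ⊔ (⨆ a : {a : Fin s // (a : ℕ) < q}, W a) ≤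
      (W i).comap (L.flip y) := by
    apply sup_le
    · intro h hh
      simpa [Submodule.mem_comap] using hW_inv i h hh y hy
    · refine iSup_le fun a => fun x' hx' => ?_
      simpa [Submodule.mem_comap] using key a a.2 x' hx' y hy
  simpa [Submodule.mem_comap] using hS hx
end

section
/- Suppose v̂₁ := min_{i∈I} v_i < 0 and there exist indices i₀, j₀, k₀ ∈ I and ε > 0 such that [i₀j₀k₀] ≥ ε and v_{i₀} − v_{j₀} − v_{k₀} + v̂₁ ≥ ε. Then scal(t) → −∞ as t → +∞. (The scalar curvature diverges to −∞ along any geodesic ray whose direction is not a submersion direction.) -/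
open Filter

/-- If `v̂₁ = min_i v_i < 0` and there are indices `i₀, j₀, k₀` and
`ε > 0` with `[i₀j₀k₀] ≥ ε` and `v_{i₀} − v_{j₀} − v_{k₀} + v̂₁ ≥ ε`, then the scalar
curvature `scal(t) = (1/2) Σ_i d_i b_i e^{−t v_i} − (1/4) Σ_{i,j,k} [ijk] e^{t(v_i−v_j−v_k)}`
tends to `−∞` as `t → +∞`. -/
theorem scal_tendsto_atBot_of_not_submersion_direction
    {I : Type*} [Fintype I] [Nonempty I]
    (d b : I → ℝ) (hd : ∀ i, 0 < d i) (hb : ∀ i, 0 ≤ b i)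
    (T : I → I → I → ℝ) (hT : ∀ i j k, 0 ≤ T i j k)
    (hTsymm₁ : ∀ i j k, T i j k = T j i k) (hTsymm₂ : ∀ i j k, T i j k = T i k j)
    (v : I → ℝ)
    -- v̂₁ := min_i v_i is attained at i₁ and v̂₁ < 0
    (i₁ : I) (hmin : ∀ i, v i₁ ≤ v i) (hneg : v i₁ < 0)
    -- the direction is not a submersion direction
    (i₀ j₀ k₀ : I) (ε : ℝ) (hε : 0 < ε) (hT₀ : ε ≤ T i₀ j₀ k₀)
    (hv₀ : ε ≤ v i₀ - v j₀ - v k₀ + v i₁) :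
    Tendsto (fun t : ℝ =>
        (1 / 2) * ∑ i, d i * b i * Real.exp (-(t * v i))
          - (1 / 4) * ∑ i, ∑ j, ∑ k, T i j k * Real.exp (t * (v i - v j - v k)))
      atTop atBot := by
  set C : ℝ := ∑ i, d i * b i with hC
  have hbound : ∀ t : ℝ, 0 ≤ t →
      (1 / 2) * ∑ i, d i * b i * Real.exp (-(t * v i))
          - (1 / 4) * ∑ i, ∑ j, ∑ k, T i j k * Real.exp (t * (v i - v j - v k))
      ≤ Real.exp (-(t * v i₁)) * (C / 2 - (ε / 4) * Real.exp (t * ε)) := by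
    intro t ht
    have h1 : ∑ i, d i * b i * Real.exp (-(t * v i)) ≤ C * Real.exp (-(t * v i₁)) := by
      rw [hC, Finset.sum_mul]
      apply Finset.sum_le_sum
      intro i _
      have : Real.exp (-(t * v i)) ≤ Real.exp (-(t * v i₁)) := by
        apply Real.exp_le_exp.mpr
        have := mul_le_mul_of_nonneg_left (hmin i) ht
        linarith
      exact mul_le_mul_of_nonneg_left this (mul_nonneg (hd i).le (hb i))
    have h2 : ε * Real.exp (t * ε) * Real.exp (-(t * v i₁))
        ≤ ∑ i, ∑ j, ∑ k, T i j k * Real.exp (t * (v i - v j - v k)) := by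
      have hterm : ε * Real.exp (t * ε) * Real.exp (-(t * v i₁))
          ≤ T i₀ j₀ k₀ * Real.exp (t * (v i₀ - v j₀ - v k₀)) := by
        rw [mul_assoc, ← Real.exp_add]
        apply mul_le_mul hT₀ _ (Real.exp_pos _).le ((hε.trans_le hT₀).le)
        apply Real.exp_le_exp.mpr
        nlinarith [mul_le_mul_of_nonneg_left hv₀ ht]
      refine hterm.trans ?_
      have hnn : ∀ i j : I, (0:ℝ) ≤ ∑ k, T i j k * Real.exp (t * (v i - v j - v k)) :=
        fun i j => Finset.sum_nonneg fun k _ =>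
          mul_nonneg (hT i j k) (Real.exp_pos _).le
      calc T i₀ j₀ k₀ * Real.exp (t * (v i₀ - v j₀ - v k₀))
          ≤ ∑ k, T i₀ j₀ k * Real.exp (t * (v i₀ - v j₀ - v k)) :=
            Finset.single_le_sum
              (f := fun k => T i₀ j₀ k * Real.exp (t * (v i₀ - v j₀ - v k)))
              (fun k _ => mul_nonneg (hT i₀ j₀ k) (Real.exp_pos _).le)
              (Finset.mem_univ k₀)
        _ ≤ ∑ j, ∑ k, T i₀ j k * Real.exp (t * (v i₀ - v j - v k)) :=
            Finset.single_le_sum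
              (f := fun j => ∑ k, T i₀ j k * Real.exp (t * (v i₀ - v j - v k)))
              (fun j _ => hnn i₀ j) (Finset.mem_univ j₀)
        _ ≤ ∑ i, ∑ j, ∑ k, T i j k * Real.exp (t * (v i - v j - v k)) :=
            Finset.single_le_sum
              (f := fun i => ∑ j, ∑ k, T i j k * Real.exp (t * (v i - v j - v k)))
              (fun i _ => Finset.sum_nonneg fun j _ => hnn i j) (Finset.mem_univ i₀)
    have hexp := (Real.exp_pos (-(t * v i₁))).le
    nlinarith [h1, h2]
  have hmain : Tendsto (fun t : ℝ =>
      Real.exp (-(t * v i₁)) * (C / 2 - (ε / 4) * Real.exp (t * ε))) atTop atBot := by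
    apply Tendsto.atTop_mul_atBot₀
    · have : Tendsto (fun t : ℝ => t * (-v i₁)) atTop atTop :=
        Tendsto.atTop_mul_const (by linarith) tendsto_id
      have := Real.tendsto_exp_atTop.comp this
      convert this using 2 with t
      simp [Function.comp, mul_comm]
    · have hexp : Tendsto (fun t : ℝ => Real.exp (t * ε)) atTop atTop :=
        Real.tendsto_exp_atTop.comp (Tendsto.atTop_mul_const hε tendsto_id)
      have h2 : Tendsto (fun t : ℝ => (ε / 4) * Real.exp (t * ε)) atTop atTop :=
        hexp.const_mul_atTop (by positivity)
      simpa [sub_eq_add_neg] using tendsto_atBot_add_const_left atTop (C / 2) (tendsto_neg_atTop_atBot.comp h2)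
  apply tendsto_atBot_mono' _ _ hmain
  filter_upwards [eventually_ge_atTop (0:ℝ)] with t ht
  exact hbound t ht
end

section
/- Let I_1, …, I_s be the level sets of the map i ↦ v_i, listed so that v_i = v̂_m for i ∈ I_m with v̂_1 < ⋯ < v̂_s, and assume v̂_1 < 0. Assume that for every i ∈ I_1 and all j, k ∈ I, [ijk] > 0 implies that j and k lie in the same level set I_m. If i₀ ∈ I_1 satisfies 2 d_{i₀} c_{i₀} + (1/2) Σ_{j,k ∈ I_1} [i₀jk] > 0, then ric_{i₀}(t) → +∞ as t → +∞. (The Ricci curvature blows up along a submersion direction associated to a non-toral subalgebra.) -/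
open Filter

/-- Suppose `v̂₁ = min_i v_i < 0` and that for every `i` in the lowest
level set `I_1 = {i : v_i = v̂₁}`, `[ijk] > 0` implies that `j` and `k` lie in the same
level set of `v`.  If `i₀ ∈ I_1` satisfies `2 d_{i₀} c_{i₀} + (1/2) Σ_{j,k∈I_1} [i₀jk] > 0`,
then `ric_{i₀}(t) → +∞` as `t → +∞`, where
`ric_i(t) = (b_i/2) e^{−t v_i} − (1/(2d_i)) Σ_{j,k} [ijk] e^{t(v_k−v_i−v_j)}
  + (1/(4d_i)) Σ_{j,k} [ijk] e^{t(v_i−v_j−v_k)}`. -/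
theorem ricci_blowup_along_nontoral_submersion_direction
    {I : Type*} [Fintype I] [Nonempty I]
    (d b c : I → ℝ) (hd : ∀ i, 0 < d i) (hb : ∀ i, 0 ≤ b i) (hc : ∀ i, 0 ≤ c i)
    (T : I → I → I → ℝ) (hT : ∀ i j k, 0 ≤ T i j k)
    (hTsymm₁ : ∀ i j k, T i j k = T j i k) (hTsymm₂ : ∀ i j k, T i j k = T i k j)
    -- the relation d_i b_i = 2 d_i c_i + Σ_{j,k} [ijk]
    (hdbc : ∀ i, d i * b i = 2 * d i * c i + ∑ j, ∑ k, T i j k)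
    (v : I → ℝ)
    -- v̂₁ := min_i v_i is attained at i₁ and v̂₁ < 0
    (i₁ : I) (hmin : ∀ i, v i₁ ≤ v i) (hneg : v i₁ < 0)
    -- for i ∈ I_1, [ijk] > 0 forces j, k to lie in the same level set of v
    (hlevel : ∀ i j k, v i = v i₁ → 0 < T i j k → v j = v k)
    -- i₀ ∈ I_1 with 2 d_{i₀} c_{i₀} + (1/2) Σ_{j,k ∈ I_1} [i₀jk] > 0
    (i₀ : I) (hi₀ : v i₀ = v i₁)
    (hpos : 0 < 2 * d i₀ * c i₀ +
      (1 / 2) * ∑ j ∈ Finset.univ.filter (fun j => v j = v i₁),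
        ∑ k ∈ Finset.univ.filter (fun k => v k = v i₁), T i₀ j k) :
    Tendsto (fun t : ℝ =>
        (b i₀ / 2) * Real.exp (-(t * v i₀))
          - (1 / (2 * d i₀)) * ∑ j, ∑ k, T i₀ j k * Real.exp (t * (v k - v i₀ - v j))
          + (1 / (4 * d i₀)) * ∑ j, ∑ k, T i₀ j k * Real.exp (t * (v i₀ - v j - v k)))
      atTop atTop := by
  have hdpos : (0:ℝ) < d i₀ := hd i₀
  set F : Finset I := Finset.univ.filter (fun j => v j = v i₁) with hF
  set Q : ℝ := ∑ j ∈ F, ∑ k ∈ F, T i₀ j k with hQ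
  set S : ℝ := ∑ j, ∑ k, T i₀ j k with hS
  set C : ℝ := c i₀ + (1 / (4 * d i₀)) * Q with hCdef
  have hCpos : 0 < C := by
    have h := div_pos hpos (by positivity : (0:ℝ) < 2 * d i₀)
    have heq : (2 * d i₀ * c i₀ + (1/2) * Q) / (2 * d i₀) = C := by
      field_simp [hCdef]; rw [hCdef]; field_simp; ring
    linarith [heq ▸ h]
  have hkey : ∀ t : ℝ,
      C * Real.exp (t * (-v i₁))
      ≤ (b i₀ / 2) * Real.exp (-(t * v i₀))
          - (1 / (2 * d i₀)) * ∑ j, ∑ k, T i₀ j k * Real.exp (t * (v k - v i₀ - v j))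
          + (1 / (4 * d i₀)) * ∑ j, ∑ k, T i₀ j k * Real.exp (t * (v i₀ - v j - v k)) := by
    intro t
    set E : ℝ := Real.exp (t * (-v i₁)) with hE
    have hEpos : 0 < E := Real.exp_pos _
    -- second sum collapses
    have h2 : ∑ j, ∑ k, T i₀ j k * Real.exp (t * (v k - v i₀ - v j)) = S * E := by
      rw [hS, Finset.sum_mul]
      refine Finset.sum_congr rfl fun j _ => ?_
      rw [Finset.sum_mul]
      refine Finset.sum_congr rfl fun k _ => ?_
      rcases (hT i₀ j k).eq_or_lt with h | h
      · rw [← h]; ring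
      · have hjk := hlevel i₀ j k hi₀ h
        rw [hE]
        congr 2
        rw [hi₀, hjk]; ring
    -- the exponent of the first term equals t * (-v i₁)
    have h1 : Real.exp (-(t * v i₀)) = E := by
      rw [hE]; congr 1; rw [hi₀]; ring
    -- third sum is bounded below by the sum over F × F
    have h3 : Q * E ≤ ∑ j, ∑ k, T i₀ j k * Real.exp (t * (v i₀ - v j - v k)) := by
      have step1 : Q * E = ∑ j ∈ F, ∑ k ∈ F, T i₀ j k * Real.exp (t * (v i₀ - v j - v k)) := by
        rw [hQ, Finset.sum_mul]
        refine Finset.sum_congr rfl fun j hj => ?_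
        rw [Finset.sum_mul]
        refine Finset.sum_congr rfl fun k hk => ?_
        rw [hF] at hj hk
        simp only [Finset.mem_filter] at hj hk
        rw [hE]
        congr 2
        rw [hi₀, hj.2, hk.2]; ring
      rw [step1]
      have nonneg : ∀ j k : I, 0 ≤ T i₀ j k * Real.exp (t * (v i₀ - v j - v k)) :=
        fun j k => mul_nonneg (hT i₀ j k) (Real.exp_pos _).le
      calc ∑ j ∈ F, ∑ k ∈ F, T i₀ j k * Real.exp (t * (v i₀ - v j - v k))
          ≤ ∑ j ∈ F, ∑ k, T i₀ j k * Real.exp (t * (v i₀ - v j - v k)) := by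
            refine Finset.sum_le_sum fun j _ => ?_
            exact Finset.sum_le_sum_of_subset_of_nonneg (Finset.subset_univ _)
              (fun k _ _ => nonneg j k)
        _ ≤ ∑ j, ∑ k, T i₀ j k * Real.exp (t * (v i₀ - v j - v k)) :=
            Finset.sum_le_sum_of_subset_of_nonneg (Finset.subset_univ _)
              (fun j _ _ => Finset.sum_nonneg fun k _ => nonneg j k)
    rw [h1, h2]
    have h5 : b i₀ / 2 * E - 1 / (2 * d i₀) * (S * E) = c i₀ * E := by
      have h := hdbc i₀
      rw [← hS] at h
      have hd' : d i₀ ≠ 0 := hdpos.ne'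
      field_simp
      linear_combination h
    have h4 : (1 / (4 * d i₀)) * (Q * E)
        ≤ (1 / (4 * d i₀)) * ∑ j, ∑ k, T i₀ j k * Real.exp (t * (v i₀ - v j - v k)) :=
      mul_le_mul_of_nonneg_left h3 (by positivity)
    have expand : C * E = c i₀ * E + (1 / (4 * d i₀)) * (Q * E) := by rw [hCdef]; ring
    linarith [h4, h5, expand]
  have hE : Tendsto (fun t : ℝ => Real.exp (t * (-v i₁))) atTop atTop :=
    Real.tendsto_exp_atTop.comp (tendsto_id.atTop_mul_const (by linarith : (0:ℝ) < -v i₁))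
  exact tendsto_atTop_mono hkey (hE.const_mul_atTop hCpos)
end

section
/- Suppose v̂₁ := min_{i∈I} v_i < 0. If K ≥ 0 and t > 0 satisfy scal(t) ≥ −K, then Σ_{i,j,k∈I} [ijk] e^{t(v_i − v_j − v_k + v̂₁)} ≤ 2 Σ_{i∈I} d_i b_i + 4K. -/
/-- Suppose `v̂₁ = min_i v_i < 0`.  If `K ≥ 0` and `t > 0` satisfy
`scal(t) ≥ −K`, then `Σ_{i,j,k} [ijk] e^{t(v_i − v_j − v_k + v̂₁)} ≤ 2 Σ_i d_i b_i + 4K`. -/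
theorem bracket_sum_bound_of_scal_bounded_below
    {I : Type*} [Fintype I] [Nonempty I]
    (d b : I → ℝ) (hd : ∀ i, 0 < d i) (hb : ∀ i, 0 ≤ b i)
    (T : I → I → I → ℝ) (hT : ∀ i j k, 0 ≤ T i j k)
    (hTsymm₁ : ∀ i j k, T i j k = T j i k) (hTsymm₂ : ∀ i j k, T i j k = T i k j)
    (v : I → ℝ)
    -- v̂₁ := min_i v_i is attained at i₁ and v̂₁ < 0
    (i₁ : I) (hmin : ∀ i, v i₁ ≤ v i) (hneg : v i₁ < 0)
    (K : ℝ) (hK : 0 ≤ K) (t : ℝ) (ht : 0 < t)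
    -- scal(t) ≥ −K
    (hscal : -K ≤ (1 / 2) * ∑ i, d i * b i * Real.exp (-(t * v i))
        - (1 / 4) * ∑ i, ∑ j, ∑ k, T i j k * Real.exp (t * (v i - v j - v k))) :
    ∑ i, ∑ j, ∑ k, T i j k * Real.exp (t * (v i - v j - v k + v i₁))
      ≤ 2 * (∑ i, d i * b i) + 4 * K := by
  set E := Real.exp (t * v i₁) with hE
  have hEpos : 0 < E := Real.exp_pos _
  have hE1 : E ≤ 1 := Real.exp_le_one_iff.2 (by nlinarith)
  set S := ∑ i, ∑ j, ∑ k, T i j k * Real.exp (t * (v i - v j - v k)) with hSdef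
  have hSnn : 0 ≤ S := by
    apply Finset.sum_nonneg; intro i _
    apply Finset.sum_nonneg; intro j _
    apply Finset.sum_nonneg; intro k _
    exact mul_nonneg (hT i j k) (Real.exp_pos _).le
  set A := ∑ i, d i * b i * Real.exp (-(t * v i)) with hAdef
  set B := ∑ i, d i * b i with hBdef
  have hAB : A ≤ Real.exp (-(t * v i₁)) * B := by
    rw [hAdef, hBdef, Finset.mul_sum]
    apply Finset.sum_le_sum
    intro i _
    rw [mul_comm (Real.exp _)]
    apply mul_le_mul_of_nonneg_left _ (mul_nonneg (hd i).le (hb i))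
    exact Real.exp_le_exp.2 (by nlinarith [hmin i])
  have hLHS : ∑ i, ∑ j, ∑ k, T i j k * Real.exp (t * (v i - v j - v k + v i₁)) = E * S := by
    rw [hSdef, Finset.mul_sum]
    apply Finset.sum_congr rfl; intro i _
    rw [Finset.mul_sum]
    apply Finset.sum_congr rfl; intro j _
    rw [Finset.mul_sum]
    apply Finset.sum_congr rfl; intro k _
    rw [hE, show t * (v i - v j - v k + v i₁) = t * v i₁ + t * (v i - v j - v k) by ring,
      Real.exp_add]
    ring
  have hS4 : S ≤ 4 * K + 2 * A := by linarith
  have hEA : E * Real.exp (-(t * v i₁)) = 1 := by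
    rw [hE, ← Real.exp_add]; simp
  rw [hLHS]
  have h1 : E * S ≤ E * (4 * K + 2 * A) :=
    mul_le_mul_of_nonneg_left hS4 hEpos.le
  have h2 : E * A ≤ E * (Real.exp (-(t * v i₁)) * B) :=
    mul_le_mul_of_nonneg_left hAB hEpos.le
  have hBnn : 0 ≤ B := Finset.sum_nonneg fun i _ => mul_nonneg (hd i).le (hb i)
  nlinarith [mul_le_mul_of_nonneg_left hE1 hK]
end

section
/- For each n ∈ ℕ let scal^{(n)} be the function built from data d_i > 0, b_i^{(n)} ≥ 0, [ijk]^{(n)} ≥ 0 (invariant under permutations of the three indices) and v_i^{(n)} ∈ ℝ. Assume that for each i the sequence (b_i^{(n)})_n is bounded, that [ijk]^{(n)} → [ijk]^{(∞)} and v_i^{(n)} → v_i^{(∞)} as n → ∞, that min_{i∈I} v_i^{(n)} < 0 for every n, that t_n → +∞, and that there is K ≥ 0 with scal^{(n)}(t_n) ≥ −K for all n. Then for all i, j, k ∈ I: [ijk]^{(∞)} > 0 implies v_i^{(∞)} − v_j^{(∞)} − v_k^{(∞)} + min_{l∈I} v_l^{(∞)} ≤ 0. (The limit direction of a divergent sequence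 of invariant metrics with scalar curvature bounded below is a submersion direction.) -/
open Filter

/-- Consider, for each `n`, scalar curvature data `d_i > 0`,
`b_i⁽ⁿ⁾ ≥ 0` (bounded in `n`), `[ijk]⁽ⁿ⁾ ≥ 0` converging to `[ijk]⁽∞⁾`, and `v_i⁽ⁿ⁾`
converging to `v_i⁽∞⁾` with `min_i v_i⁽ⁿ⁾ < 0`.  If `t_n → +∞` and
`scal⁽ⁿ⁾(t_n) ≥ −K` for all `n`, then `[ijk]⁽∞⁾ > 0` implies
`v_i⁽∞⁾ − v_j⁽∞⁾ − v_k⁽∞⁾ + min_l v_l⁽∞⁾ ≤ 0`: the limit direction is a submersion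
direction. -/
theorem limit_direction_is_submersion_direction
    {I : Type*} [Fintype I] [Nonempty I]
    (d : I → ℝ) (hd : ∀ i, 0 < d i)
    (b : ℕ → I → ℝ) (hb0 : ∀ n i, 0 ≤ b n i)
    (hb_bdd : ∀ i, ∃ B : ℝ, ∀ n, b n i ≤ B)
    (T : ℕ → I → I → I → ℝ) (hT0 : ∀ n i j k, 0 ≤ T n i j k)
    (hTsymm₁ : ∀ n i j k, T n i j k = T n j i k)
    (hTsymm₂ : ∀ n i j k, T n i j k = T n i k j)
    (Tinf : I → I → I → ℝ)
    (hTconv : ∀ i j k, Tendsto (fun n => T n i j k) atTop (nhds (Tinf i j k)))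
    (v : ℕ → I → ℝ) (vinf : I → ℝ)
    (hvconv : ∀ i, Tendsto (fun n => v n i) atTop (nhds (vinf i)))
    -- min_i v_i⁽ⁿ⁾ < 0 for every n
    (hvneg : ∀ n, ∃ i, v n i < 0)
    -- t_n → +∞
    (t : ℕ → ℝ) (htpos : ∀ n, 0 < t n) (ht : Tendsto t atTop atTop)
    -- scal⁽ⁿ⁾(t_n) ≥ −K
    (K : ℝ) (hK : 0 ≤ K)
    (hscal : ∀ n, -K ≤ (1 / 2) * ∑ i, d i * b n i * Real.exp (-(t n * v n i))
        - (1 / 4) * ∑ i, ∑ j, ∑ k, T n i j k * Real.exp (t n * (v n i - v n j - v n k))) :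
    ∀ i j k, 0 < Tinf i j k →
      vinf i - vinf j - vinf k + (⨅ l, vinf l) ≤ 0 := by
  intro i j k hTpos
  by_contra hcon
  push_neg at hcon
  set m := ⨅ l, vinf l with hmdef
  have hbdd : BddBelow (Set.range vinf) := (Set.finite_range vinf).bddBelow
  have hml : ∀ l, m ≤ vinf l := fun l => ciInf_le hbdd l
  -- m ≤ 0
  have hm0 : m ≤ 0 := by
    by_contra h
    push_neg at h
    have hev : ∀ᶠ n in atTop, ∀ l, m / 2 ≤ v n l :=
      eventually_all.2 fun l =>
        (hvconv l).eventually (eventually_ge_nhds (by linarith [hml l]))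
    obtain ⟨n, hn⟩ := hev.exists
    obtain ⟨l, hl⟩ := hvneg n
    linarith [hn l]
  set A := vinf i - vinf j - vinf k with hAdef
  set η := (A + m) / 2 with hηdef
  have hη0 : 0 < η := by rw [hηdef]; linarith
  -- bounds on b
  choose B hB using hb_bdd
  have hB0 : ∀ l, 0 ≤ B l := fun l => le_trans (hb0 0 l) (hB l 0)
  set C₀ := ∑ l, d l * B l with hC₀def
  have hC₀0 : 0 ≤ C₀ :=
    Finset.sum_nonneg fun l _ => mul_nonneg (hd l).le (hB0 l)
  set M := (4 * C₀ + 8 * (K + 1)) / Tinf i j k with hMdef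
  have hM0 : 0 ≤ M := by
    apply div_nonneg (by linarith) hTpos.le
  have hTM : Tinf i j k / 8 * M = C₀ / 2 + K + 1 := by
    rw [hMdef]
    field_simp
    ring
  -- eventual facts
  have Ev1 : ∀ᶠ n in atTop, ∀ l, m - η / 2 ≤ v n l :=
    eventually_all.2 fun l =>
      (hvconv l).eventually (eventually_ge_nhds (by linarith [hml l]))
  have Ev2 : ∀ᶠ n in atTop, A - η / 2 ≤ v n i - v n j - v n k :=
    (((hvconv i).sub (hvconv j)).sub (hvconv k)).eventually
      (eventually_ge_nhds (by linarith))
  have Ev3 : ∀ᶠ n in atTop, Tinf i j k / 2 ≤ T n i j k :=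
    (hTconv i j k).eventually (eventually_ge_nhds (by linarith))
  have Ev4 : ∀ᶠ n in atTop, M ≤ Real.exp (η * t n) := by
    have h' : Tendsto (fun n => Real.exp (η * t n)) atTop atTop :=
      Real.tendsto_exp_atTop.comp (ht.const_mul_atTop hη0)
    exact h'.eventually_ge_atTop M
  obtain ⟨n, h1, h2, h3, h4⟩ := (Ev1.and (Ev2.and (Ev3.and Ev4))).exists
  set X := Real.exp (η * t n) with hXdef
  set E := Real.exp (t n * (η / 2 - m)) with hEdef
  have hE1 : (1 : ℝ) ≤ E := by
    rw [show (1 : ℝ) = Real.exp 0 from (Real.exp_zero).symm, hEdef]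
    exact Real.exp_le_exp.mpr (by nlinarith [htpos n, hη0, hm0])
  clear_value m A η C₀ M X E
  -- bound the first sum
  have hS1 : ∑ l, d l * b n l * Real.exp (-(t n * v n l)) ≤ C₀ * E := by
    calc ∑ l, d l * b n l * Real.exp (-(t n * v n l))
        ≤ ∑ l, d l * B l * E := by
          apply Finset.sum_le_sum
          intro l _
          have hmul : t n * (m - η / 2) ≤ t n * v n l :=
            mul_le_mul_of_nonneg_left (h1 l) (htpos n).le
          have hexp : Real.exp (-(t n * v n l)) ≤ E := by
            rw [hEdef]
            exact Real.exp_le_exp.mpr (by linarith [hmul])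
          exact mul_le_mul (mul_le_mul_of_nonneg_left (hB l n) (hd l).le) hexp
            (Real.exp_pos _).le (mul_nonneg (hd l).le (hB0 l))
      _ = C₀ * E := by rw [hC₀def]; exact (Finset.sum_mul _ _ _).symm
  -- bound the triple sum from below
  have tnonneg : ∀ i' j' k' : I,
      0 ≤ T n i' j' k' * Real.exp (t n * (v n i' - v n j' - v n k')) :=
    fun i' j' k' => mul_nonneg (hT0 n i' j' k') (Real.exp_pos _).le
  have key : Tinf i j k / 2 * (E * X) ≤
      ∑ i', ∑ j', ∑ k', T n i' j' k' * Real.exp (t n * (v n i' - v n j' - v n k')) := by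
    have hEX : E * X = Real.exp (t n * (A - η / 2)) := by
      rw [hEdef, hXdef, ← Real.exp_add]
      exact congrArg Real.exp (by rw [hηdef]; ring)
    have step0 : Tinf i j k / 2 * (E * X) ≤
        T n i j k * Real.exp (t n * (v n i - v n j - v n k)) := by
      rw [hEX]
      have hexp' : Real.exp (t n * (A - η / 2)) ≤
          Real.exp (t n * (v n i - v n j - v n k)) :=
        Real.exp_le_exp.mpr (mul_le_mul_of_nonneg_left h2 (htpos n).le)
      exact mul_le_mul h3 hexp' (Real.exp_pos _).le (hT0 n i j k)
    calc Tinf i j k / 2 * (E * X)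
        ≤ T n i j k * Real.exp (t n * (v n i - v n j - v n k)) := step0
      _ ≤ ∑ k', T n i j k' * Real.exp (t n * (v n i - v n j - v n k')) :=
          Finset.single_le_sum (fun k' _ => tnonneg i j k') (Finset.mem_univ k)
      _ ≤ ∑ j', ∑ k', T n i j' k' * Real.exp (t n * (v n i - v n j' - v n k')) :=
          Finset.single_le_sum
            (fun j' _ => Finset.sum_nonneg fun k' _ => tnonneg i j' k')
            (Finset.mem_univ j)
      _ ≤ ∑ i', ∑ j', ∑ k', T n i' j' k' * Real.exp (t n * (v n i' - v n j' - v n k')) :=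
          Finset.single_le_sum
            (fun i' _ => Finset.sum_nonneg fun j' _ =>
              Finset.sum_nonneg fun k' _ => tnonneg i' j' k')
            (Finset.mem_univ i)
  -- final contradiction
  have hE0 : (0 : ℝ) ≤ E := by linarith
  have p1 : Tinf i j k / 8 * (M * E) ≤ Tinf i j k / 8 * (X * E) :=
    mul_le_mul_of_nonneg_left (mul_le_mul_of_nonneg_right h4 hE0) (by linarith)
  have p2 : (K + 1) * 1 ≤ (K + 1) * E := mul_le_mul_of_nonneg_left hE1 (by linarith)
  have hTME : Tinf i j k / 8 * M * E = (C₀ / 2 + K + 1) * E := congrArg (· * E) hTM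
  have step2 : (1 / 2 : ℝ) * (C₀ * E) - (1 / 4) * (Tinf i j k / 2 * (E * X)) ≤ -(K + 1) := by
    nlinarith [p1, p2, hTME]
  have := hscal n
  linarith [hS1, key, step2, this]
end

section
/- Assume v_1 ≤ v_2 ≤ ⋯ ≤ v_ℓ and let 1 ≤ r < ℓ. Suppose: (i) d_i b_i = Σ_{j,k∈I} [ijk] for every i ≤ r (torality of the subalgebra spanned by the first r modules); (ii) there is C > 0 such that Σ_{j,k ≤ r} [ijk] ≤ C · Σ_{j ≤ r < k} [ijk] for every i ≤ r; (iii) there is ε > 0 such that v_k − v_j > ε whenever j ≤ r < k. Then for every t > 0 with e^{tε} ≥ 2C + 4 the restricted scalar curvature estimate holds: scal(t) ≤ (1/2) Σ_{i > r} d_i b_i e^{−t v_i} − (1/4) Σ_{i,j,k > r} [ijk] e^{t(v_i − v_j − v_k)}. -/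
open Finset

private lemma two_le_exp_add (x : ℝ) : 2 ≤ Real.exp x + Real.exp (-x) := by
  have h1 := Real.add_one_le_exp x
  have h2 := Real.add_one_le_exp (-x)
  linarith

private lemma pairing_sum {α : Type*} (s : Finset α) (f : α → α → ℝ)
    (hf : ∀ i k, 0 ≤ f i k) (hsymm : ∀ i k, f i k = f k i) (g : α → ℝ) :
    ∑ i ∈ s, ∑ k ∈ s, f i k ≤ ∑ i ∈ s, ∑ k ∈ s, f i k * Real.exp (g i - g k) := by
  have hswap : ∑ i ∈ s, ∑ k ∈ s, f i k * Real.exp (g i - g k)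
      = ∑ i ∈ s, ∑ k ∈ s, f i k * Real.exp (g k - g i) := by
    rw [Finset.sum_comm]
    exact Finset.sum_congr rfl fun i _ => Finset.sum_congr rfl fun k _ => by rw [hsymm]
  have key : ∑ i ∈ s, ∑ k ∈ s, (2 * f i k)
      ≤ ∑ i ∈ s, ∑ k ∈ s,
          (f i k * Real.exp (g i - g k) + f i k * Real.exp (g k - g i)) := by
    refine Finset.sum_le_sum fun i _ => Finset.sum_le_sum fun k _ => ?_
    have h2 : 2 ≤ Real.exp (g i - g k) + Real.exp (g k - g i) := by
      have := two_le_exp_add (g i - g k)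
      rwa [neg_sub] at this
    nlinarith [hf i k]
  simp only [Finset.sum_add_distrib] at key
  rw [← hswap] at key
  have h2 : ∑ i ∈ s, ∑ k ∈ s, (2 * f i k) = 2 * ∑ i ∈ s, ∑ k ∈ s, f i k := by
    simp [Finset.mul_sum]
  rw [h2] at key
  linarith

/-- (Böhm's estimate, Proposition on restricted scalar curvature.) -/
theorem restricted_scal_estimate {ℓ : ℕ}
    (d b : Fin ℓ → ℝ) (hd : ∀ i, 0 < d i) (hb : ∀ i, 0 ≤ b i)
    (T : Fin ℓ → Fin ℓ → Fin ℓ → ℝ) (hT : ∀ i j k, 0 ≤ T i j k)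
    (hTsymm₁ : ∀ i j k, T i j k = T j i k) (hTsymm₂ : ∀ i j k, T i j k = T i k j)
    (v : Fin ℓ → ℝ) (hv : Monotone v)
    (r : ℕ) (hr1 : 1 ≤ r) (hrℓ : r < ℓ)
    -- (i) torality of the subalgebra spanned by the first r modules
    (htoral : ∀ i : Fin ℓ, (i : ℕ) < r → d i * b i = ∑ j, ∑ k, T i j k)
    -- (ii) the crucial estimate with constant C
    (C : ℝ) (hC : 0 < C)
    (hCineq : ∀ i : Fin ℓ, (i : ℕ) < r →
      ∑ j ∈ Finset.univ.filter (fun j : Fin ℓ => (j : ℕ) < r),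
        ∑ k ∈ Finset.univ.filter (fun k : Fin ℓ => (k : ℕ) < r), T i j k
      ≤ C * ∑ j ∈ Finset.univ.filter (fun j : Fin ℓ => (j : ℕ) < r),
            ∑ k ∈ Finset.univ.filter (fun k : Fin ℓ => r ≤ (k : ℕ)), T i j k)
    -- (iii) the eigenvalue gap
    (ε : ℝ) (hε : 0 < ε)
    (hgap : ∀ j k : Fin ℓ, (j : ℕ) < r → r ≤ (k : ℕ) → ε < v k - v j) :
    ∀ t : ℝ, 0 < t → 2 * C + 4 ≤ Real.exp (t * ε) →
      (1 / 2) * ∑ i, d i * b i * Real.exp (-(t * v i))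
        - (1 / 4) * ∑ i, ∑ j, ∑ k, T i j k * Real.exp (t * (v i - v j - v k))
      ≤ (1 / 2) * ∑ i ∈ Finset.univ.filter (fun i : Fin ℓ => r ≤ (i : ℕ)),
            d i * b i * Real.exp (-(t * v i))
        - (1 / 4) * ∑ i ∈ Finset.univ.filter (fun i : Fin ℓ => r ≤ (i : ℕ)),
            ∑ j ∈ Finset.univ.filter (fun j : Fin ℓ => r ≤ (j : ℕ)),
              ∑ k ∈ Finset.univ.filter (fun k : Fin ℓ => r ≤ (k : ℕ)),
                T i j k * Real.exp (t * (v i - v j - v k)) := by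
  intro t ht hexp
  have hTsym3 : ∀ i j k, T i j k = T j k i := fun i j k =>
    (hTsymm₁ i j k).trans (hTsymm₂ j i k)
  set L := Finset.univ.filter (fun i : Fin ℓ => (i : ℕ) < r) with hLdef
  set H := Finset.univ.filter (fun i : Fin ℓ => r ≤ (i : ℕ)) with hHdef
  have hmemL : ∀ i : Fin ℓ, i ∈ L → (i : ℕ) < r := by
    intro i hi
    simpa [hLdef] using hi
  have hmemH : ∀ i : Fin ℓ, i ∈ H → r ≤ (i : ℕ) := by
    intro i hi
    simpa [hHdef] using hi
  have hsplit : ∀ f : Fin ℓ → ℝ, ∑ i, f i = ∑ i ∈ L, f i + ∑ i ∈ H, f i := by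
    intro f
    rw [← Finset.sum_filter_add_sum_filter_not Finset.univ (fun i : Fin ℓ => (i : ℕ) < r) f]
    congr 1
    apply Finset.sum_congr _ fun _ _ => rfl
    rw [hHdef]
    ext i
    simp [not_lt]
  -- abbreviations
  have hE0 : ∀ i j k : Fin ℓ, 0 ≤ T i j k * Real.exp (t * (v i - v j - v k)) :=
    fun i j k => mul_nonneg (hT i j k) (Real.exp_pos _).le
  set W := ∑ i ∈ L, (∑ j ∈ L, ∑ k ∈ H, T i j k) * Real.exp (-(t * v i)) with hWdef
  set A := ∑ i ∈ L, (∑ j ∈ H, ∑ k ∈ H, T i j k) * Real.exp (-(t * v i)) with hAdef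
  set SLL := ∑ i ∈ L, (∑ j ∈ L, ∑ k ∈ L, T i j k) * Real.exp (-(t * v i)) with hSdef
  have hW0 : 0 ≤ W := Finset.sum_nonneg fun i _ => mul_nonneg
    (Finset.sum_nonneg fun _ _ => Finset.sum_nonneg fun _ _ => hT _ _ _) (Real.exp_pos _).le
  have hSLL : SLL ≤ C * W := by
    rw [hSdef, hWdef, Finset.mul_sum]
    refine Finset.sum_le_sum fun i hi => ?_
    rw [← mul_assoc]
    exact mul_le_mul_of_nonneg_right (hCineq i (hmemL i hi)) (Real.exp_pos _).le
  -- the left-hand side decomposition via torality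
  have hLHS : ∑ i ∈ L, d i * b i * Real.exp (-(t * v i)) = SLL + 2 * W + A := by
    rw [hSdef, hWdef, hAdef, Finset.mul_sum, ← Finset.sum_add_distrib, ← Finset.sum_add_distrib]
    refine Finset.sum_congr rfl fun i hi => ?_
    rw [htoral i (hmemL i hi)]
    have e3 : ∑ j ∈ H, ∑ k ∈ L, T i j k = ∑ j ∈ L, ∑ k ∈ H, T i j k := by
      rw [Finset.sum_comm]
      exact Finset.sum_congr rfl fun a _ => Finset.sum_congr rfl fun b _ => hTsymm₂ i b a
    have expand : ∑ j, ∑ k, T i j k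
        = (∑ j ∈ L, ∑ k ∈ L, T i j k) + 2 * (∑ j ∈ L, ∑ k ∈ H, T i j k)
          + ∑ j ∈ H, ∑ k ∈ H, T i j k := by
      rw [hsplit (fun j => ∑ k, T i j k),
        show (∑ j ∈ L, ∑ k, T i j k) = ∑ j ∈ L, (∑ k ∈ L, T i j k + ∑ k ∈ H, T i j k) from
          Finset.sum_congr rfl fun j _ => hsplit _,
        show (∑ j ∈ H, ∑ k, T i j k) = ∑ j ∈ H, (∑ k ∈ L, T i j k + ∑ k ∈ H, T i j k) from
          Finset.sum_congr rfl fun j _ => hsplit _,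
        Finset.sum_add_distrib, Finset.sum_add_distrib, e3]
      ring
    rw [expand]
    ring
  -- decomposition of the part of the triple sum with i ∈ H
  have hinner : ∀ i : Fin ℓ, ∑ j, ∑ k, T i j k * Real.exp (t * (v i - v j - v k))
      = (∑ j ∈ L, ∑ k ∈ L, T i j k * Real.exp (t * (v i - v j - v k))
          + ∑ j ∈ L, ∑ k ∈ H, T i j k * Real.exp (t * (v i - v j - v k)))
        + (∑ j ∈ H, ∑ k ∈ L, T i j k * Real.exp (t * (v i - v j - v k))
          + ∑ j ∈ H, ∑ k ∈ H, T i j k * Real.exp (t * (v i - v j - v k))) := by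
    intro i
    rw [hsplit]
    congr 1
    · rw [← Finset.sum_add_distrib]
      exact Finset.sum_congr rfl fun j _ => hsplit _
    · rw [← Finset.sum_add_distrib]
      exact Finset.sum_congr rfl fun j _ => hsplit _
  have hFfull : ∑ i ∈ H, ∑ j, ∑ k, T i j k * Real.exp (t * (v i - v j - v k))
      = ((∑ i ∈ H, ∑ j ∈ L, ∑ k ∈ L, T i j k * Real.exp (t * (v i - v j - v k))
          + ∑ i ∈ H, ∑ j ∈ L, ∑ k ∈ H, T i j k * Real.exp (t * (v i - v j - v k)))
        + (∑ i ∈ H, ∑ j ∈ H, ∑ k ∈ L, T i j k * Real.exp (t * (v i - v j - v k))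
          + ∑ i ∈ H, ∑ j ∈ H, ∑ k ∈ H, T i j k * Real.exp (t * (v i - v j - v k)))) := by
    simp only [hinner, Finset.sum_add_distrib]
  -- (H, L, L) category dominates e^{tε} W
  have hHLL : Real.exp (t * ε) * W
      ≤ ∑ i ∈ H, ∑ j ∈ L, ∑ k ∈ L, T i j k * Real.exp (t * (v i - v j - v k)) := by
    have reorder : ∑ i ∈ H, ∑ j ∈ L, ∑ k ∈ L, T i j k * Real.exp (t * (v i - v j - v k))
        = ∑ j ∈ L, ∑ k ∈ L, ∑ i ∈ H, T i j k * Real.exp (t * (v i - v j - v k)) := by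
      rw [Finset.sum_comm]
      exact Finset.sum_congr rfl fun j _ => Finset.sum_comm
    rw [reorder, hWdef, Finset.mul_sum]
    refine Finset.sum_le_sum fun j hj => ?_
    calc Real.exp (t * ε) * ((∑ a ∈ L, ∑ c ∈ H, T j a c) * Real.exp (-(t * v j)))
        = ∑ a ∈ L, ∑ c ∈ H, T j a c * (Real.exp (t * ε) * Real.exp (-(t * v j))) := by
          simp only [Finset.sum_mul, Finset.mul_sum]
          exact Finset.sum_congr rfl fun a _ => Finset.sum_congr rfl fun c _ => by ring
      _ ≤ ∑ a ∈ L, ∑ c ∈ H, T c j a * Real.exp (t * (v c - v j - v a)) := by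
          refine Finset.sum_le_sum fun a ha => Finset.sum_le_sum fun c hc => ?_
          rw [hTsym3 c j a, ← Real.exp_add]
          refine mul_le_mul_of_nonneg_left (Real.exp_le_exp.mpr ?_) (hT _ _ _)
          have hgac := hgap a c (hmemL a ha) (hmemH c hc)
          nlinarith [mul_pos ht (sub_pos.mpr hgac)]
  -- (H, L, H) category dominates A
  have hHLH : A
      ≤ ∑ i ∈ H, ∑ j ∈ L, ∑ k ∈ H, T i j k * Real.exp (t * (v i - v j - v k)) := by
    have reorder : ∑ i ∈ H, ∑ j ∈ L, ∑ k ∈ H, T i j k * Real.exp (t * (v i - v j - v k))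
        = ∑ j ∈ L, ∑ i ∈ H, ∑ k ∈ H, T i j k * Real.exp (t * (v i - v j - v k)) :=
      Finset.sum_comm
    rw [reorder, hAdef]
    refine Finset.sum_le_sum fun j hj => ?_
    have step1 : ∑ i ∈ H, ∑ k ∈ H, T i j k * Real.exp (t * (v i - v j - v k))
        = (∑ i ∈ H, ∑ k ∈ H, T i j k * Real.exp (t * v i - t * v k)) * Real.exp (-(t * v j)) := by
      rw [Finset.sum_mul]
      refine Finset.sum_congr rfl fun i _ => ?_
      rw [Finset.sum_mul]
      refine Finset.sum_congr rfl fun k _ => ?_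
      rw [mul_assoc, ← Real.exp_add]
      congr 2
      ring
    rw [step1]
    have hre : ∑ a ∈ H, ∑ c ∈ H, T j a c = ∑ a ∈ H, ∑ c ∈ H, T a j c :=
      Finset.sum_congr rfl fun a _ => Finset.sum_congr rfl fun c _ => hTsymm₁ j a c
    rw [hre]
    refine mul_le_mul_of_nonneg_right ?_ (Real.exp_pos _).le
    refine pairing_sum H (fun i k => T i j k) (fun i k => hT i j k) ?_ (fun i => t * v i)
    intro i k
    exact ((hTsymm₁ i j k).trans (hTsymm₂ j i k)).trans (hTsymm₁ j k i)
  -- (H, H, L) category dominates A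
  have hHHL : A
      ≤ ∑ i ∈ H, ∑ j ∈ H, ∑ k ∈ L, T i j k * Real.exp (t * (v i - v j - v k)) := by
    have reorder : ∑ i ∈ H, ∑ j ∈ H, ∑ k ∈ L, T i j k * Real.exp (t * (v i - v j - v k))
        = ∑ k ∈ L, ∑ i ∈ H, ∑ j ∈ H, T i j k * Real.exp (t * (v i - v j - v k)) := by
      rw [show (∑ i ∈ H, ∑ j ∈ H, ∑ k ∈ L, T i j k * Real.exp (t * (v i - v j - v k)))
          = ∑ i ∈ H, ∑ k ∈ L, ∑ j ∈ H, T i j k * Real.exp (t * (v i - v j - v k)) from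
        Finset.sum_congr rfl fun i _ => Finset.sum_comm]
      exact Finset.sum_comm
    rw [reorder, hAdef]
    refine Finset.sum_le_sum fun k hk => ?_
    have step1 : ∑ i ∈ H, ∑ j ∈ H, T i j k * Real.exp (t * (v i - v j - v k))
        = (∑ i ∈ H, ∑ j ∈ H, T i j k * Real.exp (t * v i - t * v j)) * Real.exp (-(t * v k)) := by
      rw [Finset.sum_mul]
      refine Finset.sum_congr rfl fun i _ => ?_
      rw [Finset.sum_mul]
      refine Finset.sum_congr rfl fun j _ => ?_
      rw [mul_assoc, ← Real.exp_add]
      congr 2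
      ring
    rw [step1]
    have hre : ∑ a ∈ H, ∑ c ∈ H, T k a c = ∑ a ∈ H, ∑ c ∈ H, T a c k :=
      Finset.sum_congr rfl fun a _ => Finset.sum_congr rfl fun c _ => hTsym3 k a c
    rw [hre]
    refine mul_le_mul_of_nonneg_right ?_ (Real.exp_pos _).le
    exact pairing_sum H (fun i j => T i j k) (fun i j => hT i j k)
      (fun i j => hTsymm₁ i j k) (fun i => t * v i)
  -- assembling: the full triple sum minus the (H,H,H) part dominates e^{tε} W + 2A
  have h5 : ∑ i ∈ H, ∑ j, ∑ k, T i j k * Real.exp (t * (v i - v j - v k))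
      ≤ ∑ i, ∑ j, ∑ k, T i j k * Real.exp (t * (v i - v j - v k)) := by
    rw [hsplit (fun i => ∑ j, ∑ k, T i j k * Real.exp (t * (v i - v j - v k)))]
    have : (0:ℝ) ≤ ∑ i ∈ L, ∑ j, ∑ k, T i j k * Real.exp (t * (v i - v j - v k)) :=
      Finset.sum_nonneg fun i _ => Finset.sum_nonneg fun j _ =>
        Finset.sum_nonneg fun k _ => hE0 i j k
    linarith
  rw [hFfull] at h5
  -- final computation
  rw [hsplit (fun i => d i * b i * Real.exp (-(t * v i))), hLHS]
  have hmul : (2 * C + 4) * W ≤ Real.exp (t * ε) * W :=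
    mul_le_mul_of_nonneg_right hexp hW0
  nlinarith [hHLL, hHLH, hHHL, h5, hSLL, hW0, hmul]
end

section
/- Let I = {1, …, ℓ} and d_i > 0 for i ∈ I. For each n ∈ ℕ let λ_i^{(n)} ≥ 1, b_i^{(n)} ≥ 0, c_i^{(n)} ≥ 0 and [ijk]^{(n)} ≥ 0 (invariant under permutations of the three indices) be real numbers such that the sequences (b_i^{(n)})_n, (c_i^{(n)})_n and ([ijk]^{(n)})_n are bounded. Define ric_i^{(n)} := b_i^{(n)}/(2 λ_i^{(n)}) − (1/(2 d_i)) Σ_{j,k∈I} [ijk]^{(n)} λ_k^{(n)}/(λ_i^{(n)} λ_j^{(n)}) + (1/(4 d_i)) Σ_{j,k∈I} [ijk]^{(n)} λ_i^{(n)}/(λ_j^{(n)} λ_k^{(n)}) (the Ricci eigenvalues of a sequence of invariant metrics normalized so that the most shrinking eigenvalue equals 1). If for every i ∈ I the sequence (ric_i^{(n)})_n is bounded, then the sequence Σ_{i∈I} d_i c_i^{(n)}/λ_i^{(n)} + Σ_{i,j,k∈I} [ijk]^{(n)} λ_k^{(n)}/(λ_i^{(n)} λ_j^{(n)}) is bounded;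 i.e. the sequence of metrics is algebraically non-collapsed. -/
/-- (Bounded Ricci implies algebraic non-collapse, normalized version.)
Given, for each `n`, eigenvalues `λ_i⁽ⁿ⁾ ≥ 1` and bounded nonnegative data `b_i⁽ⁿ⁾`,
`c_i⁽ⁿ⁾`, `[ijk]⁽ⁿ⁾` (the latter invariant under permutations of the indices), define
`ric_i⁽ⁿ⁾ = b_i⁽ⁿ⁾/(2λ_i⁽ⁿ⁾) − (1/(2d_i)) Σ_{j,k} [ijk]⁽ⁿ⁾ λ_k⁽ⁿ⁾/(λ_i⁽ⁿ⁾λ_j⁽ⁿ⁾)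
  + (1/(4d_i)) Σ_{j,k} [ijk]⁽ⁿ⁾ λ_i⁽ⁿ⁾/(λ_j⁽ⁿ⁾λ_k⁽ⁿ⁾)`.
If every sequence `(ric_i⁽ⁿ⁾)_n` is bounded, then the sequence
`Σ_i d_i c_i⁽ⁿ⁾/λ_i⁽ⁿ⁾ + Σ_{i,j,k} [ijk]⁽ⁿ⁾ λ_k⁽ⁿ⁾/(λ_i⁽ⁿ⁾λ_j⁽ⁿ⁾)` is bounded, i.e. the
sequence of metrics is algebraically non-collapsed. -/
theorem bounded_ricci_implies_noncollapse
    {I : Type*} [Fintype I]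
    (d : I → ℝ) (hd : ∀ i, 0 < d i)
    (lam : ℕ → I → ℝ) (hlam : ∀ n i, 1 ≤ lam n i)
    (b : ℕ → I → ℝ) (hb0 : ∀ n i, 0 ≤ b n i) (hb_bdd : ∀ i, ∃ B : ℝ, ∀ n, b n i ≤ B)
    (c : ℕ → I → ℝ) (hc0 : ∀ n i, 0 ≤ c n i) (hc_bdd : ∀ i, ∃ B : ℝ, ∀ n, c n i ≤ B)
    (T : ℕ → I → I → I → ℝ) (hT0 : ∀ n i j k, 0 ≤ T n i j k)
    (hT_bdd : ∀ i j k, ∃ B : ℝ, ∀ n, T n i j k ≤ B)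
    (hTsymm₁ : ∀ n i j k, T n i j k = T n j i k)
    (hTsymm₂ : ∀ n i j k, T n i j k = T n i k j)
    -- the Ricci eigenvalues are bounded
    (hric : ∀ i, ∃ R : ℝ, ∀ n,
      |b n i / (2 * lam n i)
        - (1 / (2 * d i)) * ∑ j, ∑ k, T n i j k * (lam n k / (lam n i * lam n j))
        + (1 / (4 * d i)) * ∑ j, ∑ k, T n i j k * (lam n i / (lam n j * lam n k))| ≤ R) :
    -- then the norm of the bracket is bounded: algebraic non-collapse
    ∃ M : ℝ, ∀ n,
      (∑ i, d i * c n i / lam n i)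
        + ∑ i, ∑ j, ∑ k, T n i j k * (lam n k / (lam n i * lam n j)) ≤ M := by
  classical
  choose B hB using hb_bdd
  choose C hC using hc_bdd
  choose R hR using hric
  have hlampos : ∀ n i, 0 < lam n i := fun n i => lt_of_lt_of_le one_pos (hlam n i)
  set S : ℕ → ℝ := fun n => ∑ i, ∑ j, ∑ k, T n i j k * (lam n k / (lam n i * lam n j))
    with hSdef
  have hswap : ∀ n, (∑ i, ∑ j, ∑ k, T n i j k * (lam n i / (lam n j * lam n k))) = S n := by
    intro n
    have h1 : (∑ i, ∑ j, ∑ k : I, T n i j k * (lam n i / (lam n j * lam n k)))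
        = ∑ k, ∑ j, ∑ i : I, T n i j k * (lam n i / (lam n j * lam n k)) :=
      calc (∑ i, ∑ j, ∑ k : I, T n i j k * (lam n i / (lam n j * lam n k)))
          = ∑ i, ∑ k, ∑ j : I, T n i j k * (lam n i / (lam n j * lam n k)) :=
            Finset.sum_congr rfl fun i _ => Finset.sum_comm
        _ = ∑ k, ∑ i, ∑ j : I, T n i j k * (lam n i / (lam n j * lam n k)) :=
            Finset.sum_comm
        _ = ∑ k, ∑ j, ∑ i : I, T n i j k * (lam n i / (lam n j * lam n k)) :=
            Finset.sum_congr rfl fun k _ => Finset.sum_comm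
    rw [h1, hSdef]
    refine Finset.sum_congr rfl fun i _ => Finset.sum_congr rfl fun j _ =>
      Finset.sum_congr rfl fun k _ => ?_
    rw [hTsymm₁ n k j i, hTsymm₂ n j k i, hTsymm₁ n j i k]
    ring
  have hS0 : ∀ n, 0 ≤ S n := by
    intro n
    refine Finset.sum_nonneg fun i _ => Finset.sum_nonneg fun j _ =>
      Finset.sum_nonneg fun k _ => ?_
    exact mul_nonneg (hT0 n i j k)
      (div_nonneg (hlampos n k).le (mul_nonneg (hlampos n i).le (hlampos n j).le))
  -- scalar curvature identity
  have hscal : ∀ n,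
      (∑ i, d i *
        (b n i / (2 * lam n i)
          - (1 / (2 * d i)) * ∑ j, ∑ k, T n i j k * (lam n k / (lam n i * lam n j))
          + (1 / (4 * d i)) * ∑ j, ∑ k, T n i j k * (lam n i / (lam n j * lam n k))))
      = (∑ i, d i * (b n i / (2 * lam n i))) - S n / 4 := by
    intro n
    have step : ∀ i : I, d i *
        (b n i / (2 * lam n i)
          - (1 / (2 * d i)) * ∑ j, ∑ k, T n i j k * (lam n k / (lam n i * lam n j))
          + (1 / (4 * d i)) * ∑ j, ∑ k, T n i j k * (lam n i / (lam n j * lam n k)))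
        = d i * (b n i / (2 * lam n i))
          - (1/2) * ∑ j, ∑ k, T n i j k * (lam n k / (lam n i * lam n j))
          + (1/4) * ∑ j, ∑ k, T n i j k * (lam n i / (lam n j * lam n k)) := by
      intro i
      have hdi : d i ≠ 0 := (hd i).ne'
      field_simp
    rw [Finset.sum_congr rfl fun i _ => step i]
    rw [Finset.sum_add_distrib, Finset.sum_sub_distrib, ← Finset.mul_sum, ← Finset.mul_sum,
      hswap n, hSdef]
    ring
  refine ⟨(∑ i, d i * C i) + 4 * (∑ i, d i * (B i / 2)) + 4 * (∑ i, d i * R i), fun n => ?_⟩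
  -- bound the Casimir term
  have h1 : (∑ i, d i * c n i / lam n i) ≤ ∑ i, d i * C i := by
    refine Finset.sum_le_sum fun i _ => ?_
    calc d i * c n i / lam n i ≤ d i * c n i :=
          div_le_self (mul_nonneg (hd i).le (hc0 n i)) (hlam n i)
      _ ≤ d i * C i := mul_le_mul_of_nonneg_left (hC i n) (hd i).le
  -- bound the bracket term
  have hE : (∑ i, d i * (b n i / (2 * lam n i))) ≤ ∑ i, d i * (B i / 2) := by
    refine Finset.sum_le_sum fun i _ => ?_
    refine mul_le_mul_of_nonneg_left ?_ (hd i).le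
    calc b n i / (2 * lam n i) ≤ b n i / 2 := by
          apply div_le_div_of_nonneg_left (hb0 n i) two_pos
          nlinarith [hlam n i]
      _ ≤ B i / 2 := by linarith [hB i n]
  have hRneg : -(∑ i, d i * R i) ≤ ∑ i, d i *
        (b n i / (2 * lam n i)
          - (1 / (2 * d i)) * ∑ j, ∑ k, T n i j k * (lam n k / (lam n i * lam n j))
          + (1 / (4 * d i)) * ∑ j, ∑ k, T n i j k * (lam n i / (lam n j * lam n k))) := by
    rw [← Finset.sum_neg_distrib]
    refine Finset.sum_le_sum fun i _ => ?_
    have := hR i n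
    have h2 := abs_le.mp this
    nlinarith [hd i, h2.1, h2.2]
  have hSle : S n ≤ 4 * (∑ i, d i * (B i / 2)) + 4 * (∑ i, d i * R i) := by
    have := hscal n
    nlinarith [hE, hRneg]
  have : (∑ i, ∑ j, ∑ k, T n i j k * (lam n k / (lam n i * lam n j))) = S n := rfl
  rw [this]
  linarith
end
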